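/- arXiv:1809.06051 — 3 statements merged into one kernel-verified Lean document; each statement's English description precedes it below -/
import Mathlib

section
/- Let (W,ω) be a fusion frame for H. Then the union of the ranges ran(U*), taken over all bounded operators U : 𝔥 → H satisfying U T_{W,ω} = Id_H (i.e. over all bounded left inverses of the analysis operator T_{W,ω}), is dense in 𝔥. -/
noncomputable section

open ContinuousLinearMap
open scoped ENNReal ComplexConjugate InnerProductSpace

/-- Orthogonal projection onto a closed subspace, as an operator on `H`. -/
def fproj {H : Type*} [NormedAddCommGroup H] [InnerProductSpace ℂ H] [CompleteSpace H]
    (W : Submodule ℂ H) (hW : IsClosed (W : Set H)) : H →L[ℂ] H :=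
  haveI : CompleteSpace W := hW.completeSpace_coe
  W.subtypeL.comp (Submodule.orthogonalProjection W)

set_option maxHeartbeats 2000000 in
set_option synthInstance.maxHeartbeats 1000000 in
/-- For a fusion frame `(W,ω)` with analysis operator `T_{W,ω} : H → 𝔥`,
the union of `ran(U*)` over all bounded left inverses `U` of `T_{W,ω}` is dense in `𝔥`. -/
theorem dense_union_ranges_adjoint_leftInverses
    {H : Type*} [NormedAddCommGroup H] [InnerProductSpace ℂ H] [CompleteSpace H]
    [TopologicalSpace.SeparableSpace H]
    {I : Type*} [Countable I]
    (W : I → Submodule ℂ H)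
    (hW : ∀ i, IsClosed ((W i) : Set H))
    (ω : I → ℝ)
    (hωseq : ∀ i, 0 ≤ ω i ∧ (ω i = 0 ↔ W i = ⊥))
    (α β : ℝ) (hα : 0 < α)
    (hframe : ∀ x : H, ∃ s : ℝ,
      HasSum (fun i => ω i ^ 2 * ‖fproj (W i) (hW i) x‖ ^ 2) s ∧
      α * ‖x‖ ^ 2 ≤ s ∧ s ≤ β * ‖x‖ ^ 2)
    -- the analysis operator T_{W,ω}
    (T : H →L[ℂ] lp (fun _ : I => H) 2)
    (hT : ∀ (x : H) (i : I), T x i = ω i • fproj (W i) (hW i) x) :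
    Dense (⋃ U ∈ {U : lp (fun _ : I => H) 2 →L[ℂ] H | U ∘L T = 1},
      Set.range ⇑(ContinuousLinearMap.adjoint U)) := by
  -- step 1 : lower bound
  have hbound : ∀ x : H, α * ‖x‖ ^ 2 ≤ ‖T x‖ ^ 2 := by
    intro x
    obtain ⟨s, hs, hls, _⟩ := hframe x
    have h2 : HasSum (fun i => ‖(T x) i‖ ^ (2 : ℝ≥0∞).toReal) (‖T x‖ ^ (2 : ℝ≥0∞).toReal) :=
      lp.hasSum_norm (by norm_num) (T x)
    have htr : (2 : ℝ≥0∞).toReal = (2 : ℝ) := by norm_num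
    have h3 : HasSum (fun i => ‖(T x) i‖ ^ 2) (‖T x‖ ^ 2) := by
      rw [htr] at h2
      simpa [Real.rpow_two] using h2
    have h4 : (fun i => ‖(T x) i‖ ^ 2) = fun i => ω i ^ 2 * ‖fproj (W i) (hW i) x‖ ^ 2 := by
      funext i
      rw [hT x i, norm_smul, Real.norm_eq_abs, abs_of_nonneg (hωseq i).1, mul_pow]
    rw [h4] at h3
    have := hs.unique h3
    linarith
  -- antilipschitz
  have hanti : AntilipschitzWith ⟨(Real.sqrt α)⁻¹, by positivity⟩ T := by
    apply T.antilipschitz_of_bound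
    intro x
    have h1 : Real.sqrt α * ‖x‖ ≤ ‖T x‖ := by
      have := hbound x
      have h2 : Real.sqrt (α * ‖x‖ ^ 2) ≤ Real.sqrt (‖T x‖ ^ 2) := Real.sqrt_le_sqrt this
      rwa [Real.sqrt_mul hα.le, Real.sqrt_sq (norm_nonneg _), Real.sqrt_sq (norm_nonneg _)] at h2
    have hsα : 0 < Real.sqrt α := Real.sqrt_pos.mpr hα
    calc ‖x‖ = (Real.sqrt α)⁻¹ * (Real.sqrt α * ‖x‖) := by field_simp
    _ ≤ (Real.sqrt α)⁻¹ * ‖T x‖ := by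
        exact mul_le_mul_of_nonneg_left h1 (by positivity)
  have hinj : Function.Injective T := hanti.injective
  have hclosed : IsClosed (Set.range T) := hanti.isClosed_range T.uniformContinuous
  set R : Submodule ℂ (lp (fun _ : I => H) 2) := LinearMap.range (T : H →ₗ[ℂ] lp (fun _ : I => H) 2) with hR
  have hRclosed : IsClosed (R : Set (lp (fun _ : I => H) 2)) := by
    rw [hR]
    have : (R : Set _) = Set.range T := by
      ext u; simp [hR, LinearMap.mem_range, Set.mem_range]
    rw [← hR] at *
    simpa [this] using hclosed
  haveI : CompleteSpace R := hRclosed.completeSpace_coe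
  set T' : H →L[ℂ] R := T.codRestrict R (fun x => LinearMap.mem_range_self _ x) with hT'
  have hT'ker : LinearMap.ker (T' : H →ₗ[ℂ] R) = ⊥ := by
    rw [LinearMap.ker_eq_bot]
    intro a b hab
    apply hinj
    have : ((T' a : R) : lp (fun _ : I => H) 2) = ((T' b : R) : _) := by rw [show T' a = T' b from hab]
    simpa [hT'] using this
  have hT'range : LinearMap.range (T' : H →ₗ[ℂ] R) = ⊤ := by
    rw [LinearMap.range_eq_top]
    rintro ⟨u, hu⟩
    obtain ⟨x, hx⟩ := hu
    exact ⟨x, Subtype.ext hx⟩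
  set e : H ≃L[ℂ] R := ContinuousLinearEquiv.ofBijective T' hT'ker hT'range with he
  set U₀ : lp (fun _ : I => H) 2 →L[ℂ] H :=
    (e.symm : R →L[ℂ] H) ∘L (Submodule.orthogonalProjection R) with hU₀
  have hU₀T : U₀ ∘L T = 1 := by
    ext x
    have h1 : Submodule.orthogonalProjection R (T x) = T' x := by
      have : ((T' x : R) : lp (fun _ : I => H) 2) = T x := rfl
      rw [← this, Submodule.orthogonalProjection_mem_subspace_eq_self]
    simp only [hU₀, comp_apply, coe_comp', Function.comp_apply, one_apply,
      ContinuousLinearEquiv.coe_coe]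
    rw [h1]
    exact ContinuousLinearEquiv.ofBijective_symm_apply_apply T' hT'ker hT'range x
  -- the key membership lemma
  have hmem : ∀ (x : H) (w : lp (fun _ : I => H) 2), x ≠ 0 → w ∈ Rᗮ →
      (T x + w) ∈ (⋃ U ∈ {U : lp (fun _ : I => H) 2 →L[ℂ] H | U ∘L T = 1},
        Set.range ⇑(ContinuousLinearMap.adjoint U)) := by
    intro x w hx hw
    set z : H := adjoint T' (T' x) with hz
    have hzx : ⟪z, x⟫_ℂ = ⟪T' x, T' x⟫_ℂ := by rw [hz, adjoint_inner_left]
    have hzne : z ≠ 0 := by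
      intro h0
      apply hx
      have h1 : ⟪T' x, T' x⟫_ℂ = 0 := by rw [← hzx, h0, inner_zero_left]
      have h2 : T' x = 0 := inner_self_eq_zero.mp h1
      have h3 : T x = 0 := congrArg Subtype.val h2
      exact hinj (h3.trans (map_zero T).symm)
    set c : H := ((‖z‖ : ℂ) ^ 2)⁻¹ • z with hc
    have hcz : ⟪c, z⟫_ℂ = 1 := by
      rw [hc, inner_smul_left, inner_self_eq_norm_sq_to_K]
      rw [map_inv₀, map_pow, Complex.conj_ofReal]
      have hne : ((‖z‖ : ℂ)) ^ 2 ≠ 0 :=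
        pow_ne_zero 2 (Complex.ofReal_ne_zero.mpr (norm_ne_zero_iff.mpr hzne))
      field_simp
      exact div_self hne
    set V : lp (fun _ : I => H) 2 →L[ℂ] H := (innerSL ℂ w).smulRight c with hV
    set U : lp (fun _ : I => H) 2 →L[ℂ] H := U₀ + V with hU
    have hVT : V ∘L T = 0 := by
      ext x'
      have hw0 : ⟪w, T x'⟫_ℂ = 0 :=
        Submodule.inner_left_of_mem_orthogonal (LinearMap.mem_range_self _ x') hw
      simp [hV, hw0]
    have hUT : U ∘L T = 1 := by rw [hU, add_comp, hU₀T, hVT, add_zero]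
    have hVadj : adjoint V = (innerSL ℂ c).smulRight w := by
      symm
      rw [eq_adjoint_iff]
      intro u v
      simp only [smulRight_apply, innerSL_apply_apply, hV, inner_smul_left, inner_smul_right,
        inner_conj_symm]
      ring
    have hU₀adj : adjoint U₀ z = T x := by
      have h1 : T' ∘L (e.symm : R →L[ℂ] H) = ContinuousLinearMap.id ℂ R := by
        refine ContinuousLinearMap.ext fun r => ?_
        have hce : ⇑e = ⇑T' := ContinuousLinearEquiv.coeFn_ofBijective T' hT'ker hT'range
        simp only [coe_comp', Function.comp_apply, ContinuousLinearEquiv.coe_coe,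
          ContinuousLinearMap.id_apply]
        rw [← hce]
        exact e.apply_symm_apply r
      have h2 : adjoint ((e.symm : R →L[ℂ] H)) z = T' x := by
        have h3 := congrArg ContinuousLinearMap.adjoint h1
        rw [adjoint_comp, adjoint_id] at h3
        have h4 := ContinuousLinearMap.ext_iff.mp h3 (T' x)
        simp only [coe_comp', Function.comp_apply, ContinuousLinearMap.id_apply] at h4
        simpa [hz] using h4
      rw [hU₀, adjoint_comp, Submodule.adjoint_orthogonalProjection]
      simp only [coe_comp', Function.comp_apply, h2]
      rfl
    have hfinal : adjoint U z = T x + w := by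
      have h5 : adjoint U = adjoint U₀ + adjoint V := by
        rw [hU]; exact map_add (ContinuousLinearMap.adjoint :
          (lp (fun _ : I => H) 2 →L[ℂ] H) ≃ₗᵢ⋆[ℂ] _) U₀ V
      rw [h5, add_apply, hU₀adj, hVadj]
      simp only [smulRight_apply, innerSL_apply_apply, hcz, one_smul]
    exact Set.mem_biUnion hUT ⟨z, hfinal⟩
  -- density
  intro y
  rw [Metric.mem_closure_iff]
  intro ε hε
  by_cases hsub : Subsingleton H
  · have hy0 : y = 0 := by
      ext i
      exact Subsingleton.elim _ _
    refine ⟨0, Set.mem_biUnion (show U₀ ∘L T = 1 from hU₀T) ⟨0, map_zero _⟩, ?_⟩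
    simpa [hy0] using hε
  · haveI : Nontrivial H := not_subsingleton_iff_nontrivial.mp hsub
    obtain ⟨x₀, hx₀⟩ := exists_ne (0 : H)
    set r : R := Submodule.orthogonalProjection R y with hr
    have hrw : (y - ↑r) ∈ Rᗮ := R.sub_starProjection_mem_orthogonal y
    obtain ⟨x, hx⟩ := LinearMap.mem_range.mp r.2
    by_cases hx0 : x = 0
    · have hr0 : (r : lp (fun _ : I => H) 2) = 0 := by rw [← hx, hx0, map_zero]
      set δ : ℝ := ε / (2 * (‖T x₀‖ + 1)) with hδ
      have hδpos : 0 < δ := by positivity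
      have hxδ : (δ : ℂ) • x₀ ≠ 0 :=
        smul_ne_zero (by exact_mod_cast hδpos.ne') hx₀
      refine ⟨T ((δ : ℂ) • x₀) + (y - ↑r), hmem _ _ hxδ hrw, ?_⟩
      rw [dist_eq_norm]
      have hdiff : y - (T ((δ : ℂ) • x₀) + (y - ↑r)) = - T ((δ : ℂ) • x₀) := by
        rw [hr0]; abel
      rw [hdiff, norm_neg, map_smul, norm_smul]
      have h9 : ‖(δ : ℂ)‖ = δ := by
        rw [Complex.norm_real, Real.norm_eq_abs, abs_of_pos hδpos]
      rw [h9]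
      have h10 : δ * ‖T x₀‖ ≤ δ * (‖T x₀‖ + 1) := by nlinarith [norm_nonneg (T x₀)]
      have h11 : δ * (‖T x₀‖ + 1) = ε / 2 := by
        rw [hδ]; field_simp
      linarith
    · have hb := hmem x (y - ↑r) hx0 hrw
      have hy : T x + (y - ↑r) = y := by rw [show T x = ↑r from hx]; abel
      rw [hy] at hb
      exact ⟨y, hb, by simpa using hε⟩
end
end

section
/- Let (W,ω) and (V,υ) be fusion Riesz bases in H, m ∈ ℓ∞(I) and R ∈ ℓ∞(I,B(H)). Then the Bessel fusion multiplier M_{mR,V,W} is invertible on H if and only if condition C(m,R) holds. -/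
noncomputable section

open ContinuousLinearMap

/-- Condition `C(m,R)` with constants `γ, δ`. -/
def CondC {H : Type*} [NormedAddCommGroup H] [InnerProductSpace ℂ H] [CompleteSpace H]
    {I : Type*} (m : I → ℂ) (R : I → H →L[ℂ] H) (γ δ : ℝ) : Prop :=
  0 < γ ∧ 0 < δ ∧ ∀ (j : I) (x : H),
    γ * ‖x‖ ≤ ‖(starRingEnd ℂ) (m j) • (ContinuousLinearMap.adjoint (R j)) x‖ ∧
    ‖(starRingEnd ℂ) (m j) • (ContinuousLinearMap.adjoint (R j)) x‖ ≤ δ * ‖x‖ ∧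
    γ * ‖x‖ ≤ ‖m j • (R j) x‖

section Aux

open scoped ENNReal

variable {H : Type*} [NormedAddCommGroup H] [InnerProductSpace ℂ H] [CompleteSpace H]
variable {I : Type*}

local notation "ℋ" => lp (fun _ : I => H) (2 : ℝ≥0∞)
local notation "⟪" x ", " y "⟫" => @inner ℂ _ _ x y

lemma two_toReal : ((2:ℝ≥0∞)).toReal = 2 := by norm_num

lemma rpow_toReal_two (x : ℝ) : x ^ ((2:ℝ≥0∞)).toReal = x ^ 2 := by
  rw [two_toReal, show (2:ℝ) = ((2:ℕ):ℝ) by norm_num, Real.rpow_natCast]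

lemma fproj_inner (W : Submodule ℂ H) (hW : IsClosed (W : Set H)) (x y : H) :
    ⟪fproj W hW x, y⟫ = ⟪x, fproj W hW y⟫ := by
  haveI : CompleteSpace W := hW.completeSpace_coe
  exact Submodule.inner_starProjection_left_eq_right W x y

lemma fproj_apply_mem (W : Submodule ℂ H) (hW : IsClosed (W : Set H)) {x : H} (hx : x ∈ W) :
    fproj W hW x = x := by
  haveI : CompleteSpace W := hW.completeSpace_coe
  exact (Submodule.starProjection_eq_self_iff (K := W)).mpr hx

lemma fproj_norm_le (W : Submodule ℂ H) (hW : IsClosed (W : Set H)) (x : H) :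
    ‖fproj W hW x‖ ≤ ‖x‖ := by
  haveI : CompleteSpace W := hW.completeSpace_coe
  calc ‖fproj W hW x‖ = ‖Submodule.orthogonalProjection W x‖ := rfl
    _ ≤ ‖Submodule.orthogonalProjection W‖ * ‖x‖ := (Submodule.orthogonalProjection W).le_opNorm x
    _ ≤ 1 * ‖x‖ := mul_le_mul_of_nonneg_right (Submodule.orthogonalProjectionOnto_norm_le W) (norm_nonneg x)
    _ = ‖x‖ := one_mul _

/-- diagonal operator on ℓ² -/
def diagCLM (S : I → H →L[ℂ] H) (c : ℝ) (hS : ∀ i, ‖S i‖ ≤ c) : ℋ →L[ℂ] ℋ := by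
  have hc' : ∀ i, ‖S i‖ ≤ max c 0 := fun i => (hS i).trans (le_max_left _ _)
  have key : ∀ (x : ℋ) (i : I), ‖S i (x i)‖ ^ (2:ℝ≥0∞).toReal
      ≤ (max c 0) ^ 2 * (‖x i‖ ^ (2:ℝ≥0∞).toReal) := by
    intro x i
    rw [rpow_toReal_two, rpow_toReal_two, ← mul_pow]
    exact pow_le_pow_left₀ (norm_nonneg _)
      (((S i).le_opNorm (x i)).trans (mul_le_mul_of_nonneg_right (hc' i) (norm_nonneg _))) 2
  have hmem : ∀ x : ℋ, Memℓp (fun i => S i (x i)) 2 := by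
    intro x
    apply memℓp_gen
    refine Summable.of_nonneg_of_le (fun i => Real.rpow_nonneg (norm_nonneg _) _)
      (key x) ?_
    exact (((lp.memℓp x).summable (by rw [two_toReal]; norm_num)).mul_left _)
  refine LinearMap.mkContinuous
    { toFun := fun x => ⟨fun i => S i (x i), hmem x⟩
      map_add' := fun x y => by
        ext i
        simp [lp.coeFn_add, Pi.add_apply]
        rfl
      map_smul' := fun a x => by
        ext i
        simp [lp.coeFn_smul, Pi.smul_apply] } (max c 0) (fun x => ?_)
  refine lp.norm_le_of_tsum_le (by rw [two_toReal]; norm_num)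
    (mul_nonneg (le_max_right _ _) (norm_nonneg _)) ?_
  have h1 : ∑' i, ‖S i (x i)‖ ^ (2:ℝ≥0∞).toReal
      ≤ (max c 0) ^ 2 * ∑' i, ‖x i‖ ^ (2:ℝ≥0∞).toReal := by
    rw [← tsum_mul_left]
    refine Summable.tsum_le_tsum (key x) ?_ ?_
    · exact ((hmem x).summable (by rw [two_toReal]; norm_num))
    · exact (((lp.memℓp x).summable (by rw [two_toReal]; norm_num)).mul_left _)
  refine h1.trans ?_
  rw [← lp.norm_rpow_eq_tsum (by rw [two_toReal]; norm_num) x]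
  rw [rpow_toReal_two, rpow_toReal_two, mul_pow]

omit [CompleteSpace H] in
@[simp] lemma diagCLM_apply (S : I → H →L[ℂ] H) (c : ℝ) (hS : ∀ i, ‖S i‖ ≤ c) (x : ℋ) (i : I) :
    (diagCLM S c hS x) i = S i (x i) := rfl

end Aux

section Aux2

open scoped ENNReal

variable {H : Type*} [NormedAddCommGroup H] [InnerProductSpace ℂ H] [CompleteSpace H]
variable {I : Type*}

local notation "ℋ" => lp (fun _ : I => H) (2 : ℝ≥0∞)
local notation "⟪" x ", " y "⟫" => @inner ℂ _ _ x y

lemma ana_norm_eq (W : I → Submodule ℂ H) (hW : ∀ i, IsClosed ((W i) : Set H))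
    (ω : I → ℝ) (hω : ∀ i, 0 ≤ ω i) (x : H) (i : I) :
    ‖ω i • fproj (W i) (hW i) x‖ ^ (2:ℝ≥0∞).toReal
      = ω i ^ 2 * ‖fproj (W i) (hW i) x‖ ^ 2 := by
  rw [rpow_toReal_two, norm_smul, Real.norm_eq_abs, abs_of_nonneg (hω i), mul_pow]

lemma ana_memℓp (W : I → Submodule ℂ H) (hW : ∀ i, IsClosed ((W i) : Set H))
    (ω : I → ℝ) (hω : ∀ i, 0 ≤ ω i) (β : ℝ)
    (hB : ∀ x : H, ∃ s : ℝ,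
      HasSum (fun i => ω i ^ 2 * ‖fproj (W i) (hW i) x‖ ^ 2) s ∧ s ≤ β * ‖x‖ ^ 2)
    (x : H) : Memℓp (fun i => ω i • fproj (W i) (hW i) x) 2 := by
  obtain ⟨s, hs, -⟩ := hB x
  apply memℓp_gen
  refine hs.summable.congr fun i => ?_
  exact (ana_norm_eq W hW ω hω x i).symm

/-- analysis operator -/
def anaCLM (W : I → Submodule ℂ H) (hW : ∀ i, IsClosed ((W i) : Set H))
    (ω : I → ℝ) (hω : ∀ i, 0 ≤ ω i) (β : ℝ)
    (hB : ∀ x : H, ∃ s : ℝ,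
      HasSum (fun i => ω i ^ 2 * ‖fproj (W i) (hW i) x‖ ^ 2) s ∧ s ≤ β * ‖x‖ ^ 2) :
    H →L[ℂ] ℋ := by
  refine LinearMap.mkContinuous
    { toFun := fun x => ⟨fun i => ω i • fproj (W i) (hW i) x, ana_memℓp W hW ω hω β hB x⟩
      map_add' := fun x y => by
        ext i
        simp only [lp.coeFn_add, map_add, smul_add]
        rfl
      map_smul' := fun a x => by
        ext i
        simp only [map_smul, lp.coeFn_smul, RingHom.id_apply]
        exact smul_comm _ _ _ } (Real.sqrt (max β 0)) (fun x => ?_)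
  refine lp.norm_le_of_tsum_le (by rw [two_toReal]; norm_num)
    (mul_nonneg (Real.sqrt_nonneg _) (norm_nonneg _)) ?_
  obtain ⟨s, hs, hsle⟩ := hB x
  have h1 : ∑' i, ‖ω i • fproj (W i) (hW i) x‖ ^ (2:ℝ≥0∞).toReal = s := by
    rw [tsum_congr (fun i => ana_norm_eq W hW ω hω x i)]
    exact hs.tsum_eq
  show ∑' i, ‖ω i • fproj (W i) (hW i) x‖ ^ (2:ℝ≥0∞).toReal ≤ _
  rw [h1, rpow_toReal_two, mul_pow, Real.sq_sqrt (le_max_right _ _)]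
  exact hsle.trans (mul_le_mul_of_nonneg_right (le_max_left _ _) (sq_nonneg _))

@[simp] lemma anaCLM_apply (W : I → Submodule ℂ H) (hW : ∀ i, IsClosed ((W i) : Set H))
    (ω : I → ℝ) (hω : ∀ i, 0 ≤ ω i) (β : ℝ)
    (hB : ∀ x : H, ∃ s : ℝ,
      HasSum (fun i => ω i ^ 2 * ‖fproj (W i) (hW i) x‖ ^ 2) s ∧ s ≤ β * ‖x‖ ^ 2)
    (x : H) (i : I) :
    (anaCLM W hW ω hω β hB x) i = ω i • fproj (W i) (hW i) x := rfl

end Aux2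

section Aux3

open scoped ENNReal

variable {H : Type*} [NormedAddCommGroup H] [InnerProductSpace ℂ H] [CompleteSpace H]
variable {I : Type*}

local notation "ℋ" => lp (fun _ : I => H) (2 : ℝ≥0∞)
local notation "⟪" x ", " y "⟫" => @inner ℂ _ _ x y

variable (W : I → Submodule ℂ H) (hW : ∀ i, IsClosed ((W i) : Set H))
    (ω : I → ℝ) (hω : ∀ i, 0 ≤ ω i) (β : ℝ)
    (hB : ∀ x : H, ∃ s : ℝ,
      HasSum (fun i => ω i ^ 2 * ‖fproj (W i) (hW i) x‖ ^ 2) s ∧ s ≤ β * ‖x‖ ^ 2)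
    (TW : lp (fun _ : I => H) 2 →L[ℂ] H)
    (hTW : ∀ x : lp (fun _ : I => H) 2, HasSum (fun i => ω i • fproj (W i) (hW i) (x i)) (TW x))

include hTW in
lemma ana_eq_adjoint : anaCLM W hW ω hω β hB = ContinuousLinearMap.adjoint TW := by
  rw [ContinuousLinearMap.eq_adjoint_iff]
  intro x y
  have h2 : HasSum (fun i => ⟪x, ω i • fproj (W i) (hW i) (y i)⟫) ⟪x, TW y⟫ :=
    (hTW y).mapL (innerSL ℂ x)
  have h3 : HasSum (fun i => ⟪(anaCLM W hW ω hω β hB x) i, y i⟫) ⟪x, TW y⟫ := by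
    refine h2.congr_fun fun i => ?_
    rw [anaCLM_apply, RCLike.real_smul_eq_coe_smul (K := ℂ),
      RCLike.real_smul_eq_coe_smul (K := ℂ), inner_smul_left, inner_smul_right,
      RCLike.conj_ofReal, fproj_inner]
  exact (lp.hasSum_inner (𝕜 := ℂ) (anaCLM W hW ω hω β hB x) y).unique h3

include hTW in
lemma ana_bijective (hTWbij : Function.Bijective TW) :
    Function.Bijective (anaCLM W hW ω hω β hB) := by
  rw [ana_eq_adjoint W hW ω hω β hB TW hTW]
  
  set eTW : ℋ ≃L[ℂ] H := ContinuousLinearEquiv.ofBijective TW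
    (LinearMap.ker_eq_bot.mpr hTWbij.injective)
    (LinearMap.range_eq_top.mpr hTWbij.surjective) with heTW
  have hco : ∀ z, eTW z = TW z := fun z => rfl
  set S : H →L[ℂ] ℋ := (eTW.symm : H →L[ℂ] ℋ) with hS
  have h1 : S ∘L TW = ContinuousLinearMap.id ℂ ℋ := by
    refine ContinuousLinearMap.ext fun z => ?_
    show eTW.symm (TW z) = z
    rw [← hco]; exact eTW.symm_apply_apply z
  have h2 : TW ∘L S = ContinuousLinearMap.id ℂ H := by
    refine ContinuousLinearMap.ext fun z => ?_
    show TW (eTW.symm z) = z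
    rw [← hco]; exact eTW.apply_symm_apply z
  have hA1 : ContinuousLinearMap.adjoint S ∘L ContinuousLinearMap.adjoint TW
      = ContinuousLinearMap.id ℂ H := by
    rw [← ContinuousLinearMap.adjoint_comp, h2, ContinuousLinearMap.adjoint_id]
  have hA2 : ContinuousLinearMap.adjoint TW ∘L ContinuousLinearMap.adjoint S
      = ContinuousLinearMap.id ℂ ℋ := by
    rw [← ContinuousLinearMap.adjoint_comp, h1, ContinuousLinearMap.adjoint_id]
  refine Function.bijective_iff_has_inverse.mpr
    ⟨ContinuousLinearMap.adjoint S, fun x => ?_, fun x => ?_⟩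
  · exact DFunLike.congr_fun hA1 x
  · exact DFunLike.congr_fun hA2 x

end Aux3

section Aux4

open scoped ENNReal

variable {H : Type*} [NormedAddCommGroup H] [InnerProductSpace ℂ H] [CompleteSpace H]
variable {I : Type*}

local notation "ℋ" => lp (fun _ : I => H) (2 : ℝ≥0∞)

lemma TV_single [DecidableEq I] (V : I → Submodule ℂ H) (hV : ∀ i, IsClosed ((V i) : Set H)) (υ : I → ℝ)
    (TV : ℋ →L[ℂ] H)
    (hTV : ∀ x : ℋ, HasSum (fun i => υ i • fproj (V i) (hV i) (x i)) (TV x))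
    (j : I) (x : H) :
    TV (lp.single (E := fun _ : I => H) 2 j x) = υ j • fproj (V j) (hV j) x := by
  have h := hTV (lp.single (E := fun _ : I => H) 2 j x)
  have h0 : ∀ i, i ≠ j → υ i • fproj (V i) (hV i) ((lp.single (E := fun _ : I => H) 2 j x) i) = 0 := by
    intro i hij
    rw [lp.single_apply_ne (E := fun _ : I => H) 2 j x hij, map_zero, smul_zero]
  have h2 : HasSum (fun i => υ i • fproj (V i) (hV i) ((lp.single (E := fun _ : I => H) 2 j x) i))
      (υ j • fproj (V j) (hV j) ((lp.single (E := fun _ : I => H) 2 j x) j)) := hasSum_single j h0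
  have h3 := h.unique h2
  rwa [lp.single_apply_self (E := fun _ : I => H) 2 j x] at h3

omit [CompleteSpace H] in
lemma diag_single [DecidableEq I] (S : I → H →L[ℂ] H) (c : ℝ) (hc : ∀ i, ‖S i‖ ≤ c) (j : I) (x : H) :
    diagCLM S c hc (lp.single (E := fun _ : I => H) 2 j x) = lp.single (E := fun _ : I => H) 2 j (S j x) := by
  ext i
  rw [diagCLM_apply]
  rcases eq_or_ne i j with rfl | hij
  · rw [lp.single_apply_self (E := fun _ : I => H) 2 i x, lp.single_apply_self (E := fun _ : I => H) 2 i (S i x)]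
  · rw [lp.single_apply_ne (E := fun _ : I => H) 2 j x hij, lp.single_apply_ne (E := fun _ : I => H) 2 j _ hij, map_zero]

lemma keyM (W : I → Submodule ℂ H) (hW : ∀ i, IsClosed ((W i) : Set H))
    (V : I → Submodule ℂ H) (hV : ∀ i, IsClosed ((V i) : Set H))
    (ω υ : I → ℝ) (hω : ∀ i, 0 ≤ ω i) (βW : ℝ)
    (hWB : ∀ x : H, ∃ s : ℝ,
      HasSum (fun i => ω i ^ 2 * ‖fproj (W i) (hW i) x‖ ^ 2) s ∧ s ≤ βW * ‖x‖ ^ 2)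
    (TV : ℋ →L[ℂ] H)
    (hTV : ∀ x : ℋ, HasSum (fun i => υ i • fproj (V i) (hV i) (x i)) (TV x))
    (m : I → ℂ) (R : I → H →L[ℂ] H) (c : ℝ) (hc : ∀ i, ‖m i • R i‖ ≤ c)
    (M : H →L[ℂ] H)
    (hM : ∀ x : H, HasSum
      (fun i => m i • (υ i * ω i) • fproj (V i) (hV i) ((R i) (fproj (W i) (hW i) x))) (M x))
    (z : H) :
    TV (diagCLM (fun i => m i • R i) c hc (anaCLM W hW ω hω βW hWB z)) = M z := by
  have h := hTV (diagCLM (fun i => m i • R i) c hc (anaCLM W hW ω hω βW hWB z))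
  have h2 : (fun i => υ i • fproj (V i) (hV i)
      ((diagCLM (fun i => m i • R i) c hc (anaCLM W hW ω hω βW hWB z)) i))
      = fun i => m i • (υ i * ω i) • fproj (V i) (hV i) ((R i) (fproj (W i) (hW i) z)) := by
    funext i
    rw [diagCLM_apply, anaCLM_apply, ContinuousLinearMap.smul_apply,
      RCLike.real_smul_eq_coe_smul (K := ℂ) (ω i), map_smul, map_smul, map_smul,
      RCLike.real_smul_eq_coe_smul (K := ℂ) (υ i),
      RCLike.real_smul_eq_coe_smul (K := ℂ) (υ i * ω i),
      smul_smul, smul_smul, smul_smul]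
    congr 1
    push_cast
    ring
  rw [h2] at h
  exact h.unique (hM z)

end Aux4

section Aux5

open scoped ENNReal

variable {H : Type*} [NormedAddCommGroup H] [InnerProductSpace ℂ H] [CompleteSpace H]
variable {I : Type*}

local notation "ℋ" => lp (fun _ : I => H) (2 : ℝ≥0∞)

lemma weight_ne_zero [DecidableEq I] (W : I → Submodule ℂ H)
    (hW : ∀ i, IsClosed ((W i) : Set H)) (ω : I → ℝ)
    (TW : ℋ →L[ℂ] H)
    (hTW : ∀ x : ℋ, HasSum (fun i => ω i • fproj (W i) (hW i) (x i)) (TW x))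
    (hinj : Function.Injective TW) {x0 : H} (hx0 : x0 ≠ 0) (j : I) : ω j ≠ 0 := by
  intro hj
  have h1 : ∀ i, ω i • fproj (W i) (hW i) ((lp.single (E := fun _ : I => H) 2 j x0) i) = 0 := by
    intro i
    rcases eq_or_ne i j with rfl | hij
    · rw [hj, zero_smul]
    · rw [lp.single_apply_ne (E := fun _ : I => H) 2 j x0 hij, map_zero, smul_zero]
  have h3 := hTW (lp.single (E := fun _ : I => H) 2 j x0)
  rw [show (fun i => ω i • fproj (W i) (hW i) ((lp.single (E := fun _ : I => H) 2 j x0) i))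
      = (fun _ : I => (0 : H)) from funext h1] at h3
  have h2 : TW (lp.single (E := fun _ : I => H) 2 j x0) = 0 := h3.unique hasSum_zero
  have h5 : lp.single (E := fun _ : I => H) 2 j x0 = 0 := hinj (by rw [h2, map_zero])
  have h6 : x0 = 0 := by
    have h7 := congr_arg (fun f : lp (fun _ : I => H) 2 => f j) h5
    simpa [lp.single_apply_self (E := fun _ : I => H) 2 j x0] using h7
  exact hx0 h6

lemma weight_le_sqrt (W : I → Submodule ℂ H) (hW : ∀ i, IsClosed ((W i) : Set H))
    (ω : I → ℝ) (hω : ∀ i, 0 ≤ ω i) (β : ℝ)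
    (hB : ∀ x : H, ∃ s : ℝ,
      HasSum (fun i => ω i ^ 2 * ‖fproj (W i) (hW i) x‖ ^ 2) s ∧ s ≤ β * ‖x‖ ^ 2)
    {j : I} (hWj : W j ≠ ⊥) : ω j ≤ Real.sqrt (max β 0) := by
  obtain ⟨x, hxW, hx0⟩ := Submodule.ne_bot_iff (W j) |>.mp hWj
  obtain ⟨s, hs, hle⟩ := hB x
  have hterm : ω j ^ 2 * ‖fproj (W j) (hW j) x‖ ^ 2 ≤ s :=
    le_hasSum hs j (fun i _ => by positivity)
  rw [fproj_apply_mem (W j) (hW j) hxW] at hterm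
  have hx2 : 0 < ‖x‖ ^ 2 := by
    have := norm_pos_iff.mpr hx0
    positivity
  have hsq : ω j ^ 2 ≤ max β 0 := by
    have h8 : ω j ^ 2 * ‖x‖ ^ 2 ≤ (max β 0) * ‖x‖ ^ 2 :=
      hterm.trans (hle.trans (mul_le_mul_of_nonneg_right (le_max_left _ _) (sq_nonneg _)))
    exact (mul_le_mul_iff_left₀ hx2).mp h8
  calc ω j = Real.sqrt (ω j ^ 2) := (Real.sqrt_sq (hω j)).symm
    _ ≤ Real.sqrt (max β 0) := Real.sqrt_le_sqrt hsq

end Aux5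


set_option maxHeartbeats 2000000 in
/-- If `(W,ω)` and `(V,υ)` are fusion Riesz bases, then the Bessel fusion
multiplier `M_{mR,V,W}` is invertible on `H` if and only if condition `C(m,R)` holds. -/
theorem riesz_multiplier_invertible_iff_condC
    {H : Type*} [NormedAddCommGroup H] [InnerProductSpace ℂ H] [CompleteSpace H]
    [TopologicalSpace.SeparableSpace H]
    {I : Type*} [Countable I]
    (W V : I → Submodule ℂ H)
    (hW : ∀ i, IsClosed ((W i) : Set H)) (hV : ∀ i, IsClosed ((V i) : Set H))
    (ω υ : I → ℝ)
    (hωseq : ∀ i, 0 ≤ ω i ∧ (ω i = 0 ↔ W i = ⊥))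
    (hυseq : ∀ i, 0 ≤ υ i ∧ (υ i = 0 ↔ V i = ⊥))
    (βW βV : ℝ)
    (hWB : ∀ x : H, ∃ s : ℝ,
      HasSum (fun i => ω i ^ 2 * ‖fproj (W i) (hW i) x‖ ^ 2) s ∧ s ≤ βW * ‖x‖ ^ 2)
    (hVB : ∀ x : H, ∃ s : ℝ,
      HasSum (fun i => υ i ^ 2 * ‖fproj (V i) (hV i) x‖ ^ 2) s ∧ s ≤ βV * ‖x‖ ^ 2)
    -- (W,ω) and (V,υ) are fusion Riesz bases: bijective synthesis operators
    (TW TV : lp (fun _ : I => H) 2 →L[ℂ] H)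
    (hTW : ∀ x : lp (fun _ : I => H) 2, HasSum (fun i => ω i • fproj (W i) (hW i) (x i)) (TW x))
    (hTV : ∀ x : lp (fun _ : I => H) 2, HasSum (fun i => υ i • fproj (V i) (hV i) (x i)) (TV x))
    (hTWbij : Function.Bijective TW) (hTVbij : Function.Bijective TV)
    (m : I → ℂ) (hm : BddAbove (Set.range fun i => ‖m i‖))
    (R : I → H →L[ℂ] H) (hR : BddAbove (Set.range fun i => ‖R i‖))
    -- the multiplier M_{mR,V,W}
    (M : H →L[ℂ] H)
    (hM : ∀ x : H, HasSum
      (fun i => m i • (υ i * ω i) • fproj (V i) (hV i) ((R i) (fproj (W i) (hW i) x))) (M x)) :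
    (∃ N : H →L[ℂ] H, M ∘L N = 1 ∧ N ∘L M = 1) ↔ ∃ γ δ : ℝ, CondC m R γ δ := by
  classical
  have hωn : ∀ i, 0 ≤ ω i := fun i => (hωseq i).1
  have hυn : ∀ i, 0 ≤ υ i := fun i => (hυseq i).1
  obtain ⟨cm, hcm⟩ := hm
  obtain ⟨cr, hcr⟩ := hR
  have hcm' : ∀ i, ‖m i‖ ≤ max cm 0 :=
    fun i => le_max_of_le_left (hcm (Set.mem_range_self i))
  have hcr' : ∀ i, ‖R i‖ ≤ max cr 0 :=
    fun i => le_max_of_le_left (hcr (Set.mem_range_self i))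
  set cmr : ℝ := max cm 0 * max cr 0 with hcmr_def
  have hcmr_nonneg : 0 ≤ cmr := mul_nonneg (le_max_right _ _) (le_max_right _ _)
  have hcmr : ∀ i, ‖m i • R i‖ ≤ cmr := by
    intro i
    rw [norm_smul]
    exact mul_le_mul (hcm' i) (hcr' i) (norm_nonneg _) (le_max_right _ _)
  set A := anaCLM W hW ω hωn βW hWB with hA_def
  have hAbij : Function.Bijective A := ana_bijective W hW ω hωn βW hWB TW hTW hTWbij
  set Dmr := diagCLM (fun i => m i • R i) cmr hcmr with hD_def
  have hkey : ∀ z : H, TV (Dmr (A z)) = M z :=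
    fun z => keyM W hW V hV ω υ hωn βW hWB TV hTV m R cmr hcmr M hM z
  set eA : H ≃L[ℂ] lp (fun _ : I => H) 2 := ContinuousLinearEquiv.ofBijective A
    (LinearMap.ker_eq_bot.mpr hAbij.injective)
    (LinearMap.range_eq_top.mpr hAbij.surjective) with heA
  set eTV : lp (fun _ : I => H) 2 ≃L[ℂ] H := ContinuousLinearEquiv.ofBijective TV
    (LinearMap.ker_eq_bot.mpr hTVbij.injective)
    (LinearMap.range_eq_top.mpr hTVbij.surjective) with heTV
  have heA_co : ∀ z : H, eA z = A z := fun z => rfl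
  have heTV_co : ∀ z, eTV z = TV z := fun z => rfl
  constructor
  · -- invertible → CondC
    rintro ⟨N, hMN, hNM⟩
    have hMNx : ∀ x, M (N x) = x := fun x => DFunLike.congr_fun hMN x
    have hNMx : ∀ x, N (M x) = x := fun x => DFunLike.congr_fun hNM x
    rcases subsingleton_or_nontrivial H with hss | hnt
    · refine ⟨1, 1, one_pos, one_pos, fun j x => ?_⟩
      have hx : x = 0 := Subsingleton.elim x 0
      subst hx
      simp
    · obtain ⟨x0, hx0⟩ := exists_ne (0 : H)
      have hωne : ∀ j, ω j ≠ 0 :=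
        weight_ne_zero W hW ω TW hTW hTWbij.injective hx0
      have hυne : ∀ j, υ j ≠ 0 :=
        weight_ne_zero V hV υ TV hTV hTVbij.injective hx0
      have hωle : ∀ j, ω j ≤ Real.sqrt (max βW 0) := fun j =>
        weight_le_sqrt W hW ω hωn βW hWB (fun hbot => hωne j ((hωseq j).2.mpr hbot))
      have hυle : ∀ j, υ j ≤ Real.sqrt (max βV 0) := fun j =>
        weight_le_sqrt V hV υ hυn βV hVB (fun hbot => hυne j ((hυseq j).2.mpr hbot))
      set CN : ℝ := Real.sqrt (max βW 0) * Real.sqrt (max βV 0) * ‖N‖ + 1 with hCN_def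
      have hCN1 : 1 ≤ CN := by
        have h1 : 0 ≤ Real.sqrt (max βW 0) * Real.sqrt (max βV 0) * ‖N‖ :=
          mul_nonneg (mul_nonneg (Real.sqrt_nonneg _) (Real.sqrt_nonneg _)) (norm_nonneg _)
        linarith
      have hCNpos : 0 < CN := lt_of_lt_of_le one_pos hCN1
      refine ⟨CN⁻¹, cmr + 1, inv_pos.mpr hCNpos, by linarith, fun j x => ?_⟩
      set pj := fproj (V j) (hV j) with hpj
      set qj := fproj (W j) (hW j) with hqj
      set T : H →L[ℂ] H := m j • R j with hT
      set NjC : H →L[ℂ] H := ((ω j : ℂ) * (υ j : ℂ)) • (qj ∘L (N ∘L pj)) with hNjC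
      have hNjC_apply : ∀ y, NjC y = ((ω j : ℂ) * (υ j : ℂ)) • qj (N (pj y)) := fun y => rfl
      -- identity 1 : T (NjC y) = y
      have hTNj : ∀ y : H, T (NjC y) = y := by
        intro y
        set z : H := N ((υ j : ℂ) • pj y) with hz
        have hDA : Dmr (A z) = lp.single (E := fun _ : I => H) 2 j y := by
          apply hTVbij.injective
          rw [hkey z, TV_single V hV υ TV hTV j y]
          calc M (N ((υ j : ℂ) • pj y)) = (υ j : ℂ) • pj y := hMNx _
            _ = υ j • pj y := (RCLike.real_smul_eq_coe_smul (K := ℂ) (υ j) (pj y)).symm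
        have hT1 : T (ω j • qj z) = y := by
          have h9 := congr_arg (fun f : lp (fun _ : I => H) 2 => f j) hDA
          simp only [lp.single_apply_self (E := fun _ : I => H) 2 j y] at h9
          exact h9
        have hc : NjC y = ω j • qj z := by
          rw [hNjC_apply, hz, RCLike.real_smul_eq_coe_smul (K := ℂ) (ω j), map_smul, map_smul,
            smul_smul]
          rfl
        rw [hc]
        exact hT1
      -- identity 2 : NjC (T y) = y
      have hNjT : ∀ y : H, NjC (T y) = y := by
        intro y
        set z' := eA.symm (lp.single (E := fun _ : I => H) 2 j y) with hz'
        have hAz' : A z' = lp.single (E := fun _ : I => H) 2 j y := eA.apply_symm_apply _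
        have hMz' : M z' = υ j • pj (T y) := by
          rw [← hkey z', hAz', diag_single (fun i => m i • R i) cmr hcmr j y,
            TV_single V hV υ TV hTV j (T y)]
        have h10 : N (υ j • pj (T y)) = z' := by rw [← hMz']; exact hNMx z'
        have h11 : NjC (T y) = ω j • qj z' := by
          rw [hNjC_apply, ← h10, RCLike.real_smul_eq_coe_smul (K := ℂ) (υ j), map_smul N,
            map_smul qj, RCLike.real_smul_eq_coe_smul (K := ℂ) (ω j), smul_smul]
          rfl
        have h12 : ω j • qj z' = y := by
          have h13 := congr_arg (fun f : lp (fun _ : I => H) 2 => f j) hAz'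
          simp only [lp.single_apply_self (E := fun _ : I => H) 2 j y] at h13
          exact h13
        rw [h11, h12]
      -- norm bound
      have hNjnorm : ‖NjC‖ ≤ CN := by
        refine ContinuousLinearMap.opNorm_le_bound _ hCNpos.le fun y => ?_
        have h14 : ‖NjC y‖ = (ω j * υ j) * ‖qj (N (pj y))‖ := by
          rw [hNjC_apply, norm_smul]
          congr 1
          rw [show ((ω j : ℂ) * (υ j : ℂ)) = ((ω j * υ j : ℝ) : ℂ) by push_cast; ring,
            Complex.norm_real, Real.norm_eq_abs, abs_of_nonneg (mul_nonneg (hωn j) (hυn j))]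
        rw [h14]
        have h15 : ‖qj (N (pj y))‖ ≤ ‖N‖ * ‖y‖ := by
          calc ‖qj (N (pj y))‖ ≤ ‖N (pj y)‖ := fproj_norm_le _ _ _
            _ ≤ ‖N‖ * ‖pj y‖ := N.le_opNorm _
            _ ≤ ‖N‖ * ‖y‖ := mul_le_mul_of_nonneg_left (fproj_norm_le _ _ _) (norm_nonneg _)
        have h16 : ω j * υ j * (‖N‖ * ‖y‖) ≤ CN * ‖y‖ := by
          have h17 : ω j * υ j * ‖N‖ ≤ Real.sqrt (max βW 0) * Real.sqrt (max βV 0) * ‖N‖ := by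
            have := mul_le_mul (mul_le_mul (hωle j) (hυle j) (hυn j) (Real.sqrt_nonneg _))
              (le_refl ‖N‖) (norm_nonneg _)
              (mul_nonneg (Real.sqrt_nonneg _) (Real.sqrt_nonneg _))
            exact this
          have h18 : ω j * υ j * ‖N‖ ≤ CN := by rw [hCN_def]; linarith
          calc ω j * υ j * (‖N‖ * ‖y‖) = (ω j * υ j * ‖N‖) * ‖y‖ := by ring
            _ ≤ CN * ‖y‖ := mul_le_mul_of_nonneg_right h18 (norm_nonneg _)
        calc (ω j * υ j) * ‖qj (N (pj y))‖
            ≤ (ω j * υ j) * (‖N‖ * ‖y‖) :=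
              mul_le_mul_of_nonneg_left h15 (mul_nonneg (hωn j) (hυn j))
          _ ≤ CN * ‖y‖ := h16
      -- operator identities and adjoints
      have hTN_op : T ∘L NjC = ContinuousLinearMap.id ℂ H :=
        ContinuousLinearMap.ext fun y => hTNj y
      have hNT_op : NjC ∘L T = ContinuousLinearMap.id ℂ H :=
        ContinuousLinearMap.ext fun y => hNjT y
      have hadj_op : ContinuousLinearMap.adjoint NjC ∘L ContinuousLinearMap.adjoint T
          = ContinuousLinearMap.id ℂ H := by
        rw [← ContinuousLinearMap.adjoint_comp, hTN_op, ContinuousLinearMap.adjoint_id]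
      have hadjnorm : ‖ContinuousLinearMap.adjoint NjC‖ = ‖NjC‖ :=
        (ContinuousLinearMap.adjoint (𝕜 := ℂ) (E := H) (F := H)).norm_map NjC
      have hadjT : ∀ y : H, ContinuousLinearMap.adjoint T y
          = (starRingEnd ℂ) (m j) • (ContinuousLinearMap.adjoint (R j)) y := by
        intro y
        rw [hT, map_smulₛₗ (ContinuousLinearMap.adjoint (𝕜 := ℂ) (E := H) (F := H)) (m j) (R j)]
        rfl
      have hlow2 : CN⁻¹ * ‖x‖ ≤ ‖ContinuousLinearMap.adjoint T x‖ := by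
        have h19 : ‖x‖ ≤ CN * ‖ContinuousLinearMap.adjoint T x‖ := by
          calc ‖x‖ = ‖ContinuousLinearMap.adjoint NjC (ContinuousLinearMap.adjoint T x)‖ := by
                rw [show ContinuousLinearMap.adjoint NjC (ContinuousLinearMap.adjoint T x)
                  = (ContinuousLinearMap.adjoint NjC ∘L ContinuousLinearMap.adjoint T) x from rfl,
                  hadj_op]
                rfl
            _ ≤ ‖ContinuousLinearMap.adjoint NjC‖ * ‖ContinuousLinearMap.adjoint T x‖ :=
                ContinuousLinearMap.le_opNorm _ _
            _ ≤ CN * ‖ContinuousLinearMap.adjoint T x‖ := by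
                rw [hadjnorm]
                exact mul_le_mul_of_nonneg_right hNjnorm (norm_nonneg _)
        calc CN⁻¹ * ‖x‖ ≤ CN⁻¹ * (CN * ‖ContinuousLinearMap.adjoint T x‖) :=
              mul_le_mul_of_nonneg_left h19 (inv_nonneg.mpr hCNpos.le)
          _ = ‖ContinuousLinearMap.adjoint T x‖ := by field_simp
      have hlow1 : CN⁻¹ * ‖x‖ ≤ ‖T x‖ := by
        have h19 : ‖x‖ ≤ CN * ‖T x‖ := by
          calc ‖x‖ = ‖NjC (T x)‖ := by rw [hNjT x]
            _ ≤ ‖NjC‖ * ‖T x‖ := ContinuousLinearMap.le_opNorm _ _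
            _ ≤ CN * ‖T x‖ := mul_le_mul_of_nonneg_right hNjnorm (norm_nonneg _)
        calc CN⁻¹ * ‖x‖ ≤ CN⁻¹ * (CN * ‖T x‖) :=
              mul_le_mul_of_nonneg_left h19 (inv_nonneg.mpr hCNpos.le)
          _ = ‖T x‖ := by field_simp
      refine ⟨?_, ?_, ?_⟩
      · rw [show (starRingEnd ℂ) (m j) • (ContinuousLinearMap.adjoint (R j)) x
          = ContinuousLinearMap.adjoint T x from (hadjT x).symm]
        exact hlow2
      · rw [show (starRingEnd ℂ) (m j) • (ContinuousLinearMap.adjoint (R j)) x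
          = ContinuousLinearMap.adjoint T x from (hadjT x).symm]
        calc ‖ContinuousLinearMap.adjoint T x‖
            ≤ ‖ContinuousLinearMap.adjoint T‖ * ‖x‖ := ContinuousLinearMap.le_opNorm _ _
          _ ≤ (cmr + 1) * ‖x‖ := by
              refine mul_le_mul_of_nonneg_right ?_ (norm_nonneg _)
              rw [(ContinuousLinearMap.adjoint (𝕜 := ℂ) (E := H) (F := H)).norm_map T]
              exact (hcmr j).trans (by linarith)
      · exact hlow1
  · -- CondC → invertible
    rintro ⟨γ, δ, hγ, hδ, hC⟩
    have hTlow : ∀ j (x : H), γ * ‖x‖ ≤ ‖(m j • R j) x‖ := by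
      intro j x
      simpa using (hC j x).2.2
    have hadj : ∀ j, ContinuousLinearMap.adjoint (m j • R j)
        = (starRingEnd ℂ) (m j) • ContinuousLinearMap.adjoint (R j) := fun j =>
      map_smulₛₗ (ContinuousLinearMap.adjoint (𝕜 := ℂ) (E := H) (F := H)) (m j) (R j)
    have hTadj_low : ∀ j (x : H), γ * ‖x‖ ≤ ‖ContinuousLinearMap.adjoint (m j • R j) x‖ := by
      intro j x
      rw [hadj j]
      simpa using (hC j x).1
    have hdiv : ∀ a b : ℝ, γ * a ≤ b → a ≤ γ⁻¹ * b := by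
      intro a b h
      calc a = γ⁻¹ * (γ * a) := by field_simp
        _ ≤ γ⁻¹ * b := mul_le_mul_of_nonneg_left h (inv_nonneg.mpr hγ.le)
    have hTbij : ∀ j, Function.Bijective (m j • R j) := by
      intro j
      have hinj : Function.Injective (m j • R j) := by
        intro x y hxy
        have h0 : (m j • R j) (x - y) = 0 := by rw [map_sub, hxy, sub_self]
        have h1 := hTlow j (x - y)
        rw [h0, norm_zero] at h1
        have hxy0 : ‖x - y‖ ≤ 0 := by nlinarith [norm_nonneg (x - y)]
        rw [← sub_eq_zero]
        exact norm_le_zero_iff.mp hxy0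
      have hclosed : IsClosed (Set.range (m j • R j)) := by
        have hal : AntilipschitzWith (⟨γ, hγ.le⟩ : NNReal)⁻¹ (m j • R j) := by
          apply ContinuousLinearMap.antilipschitz_of_bound
          intro x
          show ‖x‖ ≤ γ⁻¹ * ‖(m j • R j) x‖
          exact hdiv _ _ (hTlow j x)
        exact hal.isClosed_range (m j • R j).uniformContinuous
      have hrange_cl : IsClosed ((LinearMap.range ((m j • R j : H →L[ℂ] H) : H →ₗ[ℂ] H) : Submodule ℂ H) : Set H) := by
        rw [LinearMap.coe_range]
        exact hclosed
      haveI : CompleteSpace (LinearMap.range ((m j • R j : H →L[ℂ] H) : H →ₗ[ℂ] H)) := hrange_cl.completeSpace_coe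
      have hbot : (LinearMap.range ((m j • R j : H →L[ℂ] H) : H →ₗ[ℂ] H))ᗮ = ⊥ := by
        rw [Submodule.eq_bot_iff]
        intro x hx
        have hz : ContinuousLinearMap.adjoint (m j • R j) x = 0 := by
          set z := ContinuousLinearMap.adjoint (m j • R j) x with hz_def
          have h2 : (m j • R j) z ∈ LinearMap.range ((m j • R j : H →L[ℂ] H) : H →ₗ[ℂ] H) := LinearMap.mem_range_self _ z
          have h3 : (inner ℂ ((m j • R j) z) x : ℂ) = 0 :=
            (Submodule.mem_orthogonal _ x).mp hx _ h2
          have h4 : (inner ℂ z z : ℂ) = 0 := by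
            rw [hz_def]
            rw [ContinuousLinearMap.adjoint_inner_right]
            exact h3
          exact inner_self_eq_zero.mp h4
        have h5 := hTadj_low j x
        rw [hz, norm_zero] at h5
        have h6 : ‖x‖ ≤ 0 := by nlinarith [norm_nonneg x]
        exact norm_le_zero_iff.mp h6
      have htop := Submodule.orthogonal_eq_bot_iff.mp hbot
      exact ⟨hinj, LinearMap.range_eq_top.mp htop⟩
    set e : ∀ j : I, H ≃L[ℂ] H := fun j => ContinuousLinearEquiv.ofBijective (m j • R j)
      (LinearMap.ker_eq_bot.mpr (hTbij j).injective)
      (LinearMap.range_eq_top.mpr (hTbij j).surjective) with he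
    have he_co : ∀ j z, e j z = (m j • R j) z := fun j z => rfl
    set S : I → H →L[ℂ] H := fun j => ((e j).symm : H →L[ℂ] H) with hS_def
    have hST : ∀ j y, (m j • R j) (S j y) = y := by
      intro j y
      rw [show (m j • R j) (S j y) = e j ((e j).symm y) from rfl]
      exact (e j).apply_symm_apply y
    have hTS : ∀ j y, S j ((m j • R j) y) = y := by
      intro j y
      rw [show S j ((m j • R j) y) = (e j).symm (e j y) from rfl]
      exact (e j).symm_apply_apply y
    have hSnorm : ∀ j, ‖S j‖ ≤ γ⁻¹ := by
      intro j
      refine ContinuousLinearMap.opNorm_le_bound _ (inv_nonneg.mpr hγ.le) fun y => ?_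
      refine hdiv _ _ ?_
      calc γ * ‖S j y‖ ≤ ‖(m j • R j) (S j y)‖ := hTlow j _
        _ = ‖y‖ := by rw [hST j y]
    set D' := diagCLM S γ⁻¹ hSnorm with hD'_def
    refine ⟨((eA.symm : lp (fun _ : I => H) 2 →L[ℂ] H) ∘L D') ∘L
      (eTV.symm : H →L[ℂ] lp (fun _ : I => H) 2), ?_, ?_⟩
    · refine ContinuousLinearMap.ext fun x => ?_
      show M (eA.symm (D' (eTV.symm x))) = x
      rw [← hkey]
      have h1 : A (eA.symm (D' (eTV.symm x))) = D' (eTV.symm x) := by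
        rw [← heA_co]
        exact eA.apply_symm_apply _
      rw [h1]
      have h2 : Dmr (D' (eTV.symm x)) = eTV.symm x := by
        ext i
        exact hST i _
      rw [h2]
      rw [← heTV_co]
      exact eTV.apply_symm_apply x
    · refine ContinuousLinearMap.ext fun x => ?_
      show eA.symm (D' (eTV.symm (M x))) = x
      have h1 : eTV.symm (M x) = Dmr (A x) := by
        rw [← hkey x, ← heTV_co]
        exact eTV.symm_apply_apply _
      rw [h1]
      have h2 : D' (Dmr (A x)) = A x := by
        ext i
        exact hTS i _
      rw [h2]
      rw [← heA_co]
      exact eA.symm_apply_apply x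
end
end

section
/- Let H ≠ {0}, let (W,ω) and (V,υ) be fusion frames for H, and let m ∈ ℓ∞(I) and R ∈ ℓ∞(I,B(H)) satisfy condition C(m,R). Assume M := M_{mR,V,W} is invertible on H. For each i ∈ I set L_i := υ_i R_i* P_{V_i} (M*)^{-1} − (ω_i/conj(m_i)) P_{W_i} S_{W,ω}^{-1} and Q_i† := ω_i P_{W_i} S_{W,ω}^{-1} + conj(m_i) L_i (so Q_i† = conj(m_i) υ_i R_i* P_{V_i} (M*)^{-1}). Then Q† := {Q_i†}_{i∈I} is an operator-valued dual frame of A_W := {ω_iP_{W_i}}_{i∈I}, and it is the unique operator-valued dual frame Q of A_W with the property that M^{-1} = T*_Q D_{(mR)^{-1}} T_B for every operator-valued dual frame B of A_V := {υ_iP_{V_i}}_{i∈I}, where D_{(mR)^{-1}} : 𝔥 → 𝔥 is {x_i} ↦ {(m_iR_i)^{-1}x_i}. -/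
noncomputable section

open ContinuousLinearMap
open scoped ComplexInnerProductSpace

/-- `B` is an operator-valued Bessel sequence in `B(H)`. -/
def OpBessel {H : Type*} [NormedAddCommGroup H] [InnerProductSpace ℂ H] [CompleteSpace H]
    {I : Type*} (B : I → H →L[ℂ] H) : Prop :=
  ∃ β : ℝ, ∀ x : H, ∃ s : ℝ, HasSum (fun i => ‖B i x‖ ^ 2) s ∧ s ≤ β * ‖x‖ ^ 2

/-- `B` is an operator-valued dual frame of `A`: `B` is Bessel and `Σ_i B_i* A_i x = x`. -/
def IsOpDualOf {H : Type*} [NormedAddCommGroup H] [InnerProductSpace ℂ H] [CompleteSpace H]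
    {I : Type*} (B A : I → H →L[ℂ] H) : Prop :=
  OpBessel B ∧ ∀ x : H, HasSum (fun i => (ContinuousLinearMap.adjoint (B i)) (A i x)) x


section Helpers
variable {H : Type*} [NormedAddCommGroup H] [InnerProductSpace ℂ H] [CompleteSpace H]
  {I : Type*}


private lemma bessel_finset_bound (A : I → H →L[ℂ] H) (β : ℝ) (hβ : 0 ≤ β)
    (hA : ∀ x : H, ∃ s : ℝ, HasSum (fun i => ‖A i x‖ ^ 2) s ∧ s ≤ β * ‖x‖ ^ 2)
    (z : I → H) (t : Finset I) :
    ‖∑ i ∈ t, ContinuousLinearMap.adjoint (A i) (z i)‖ ^ 2 ≤ β * ∑ i ∈ t, ‖z i‖ ^ 2 := by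
  set u := ∑ i ∈ t, ContinuousLinearMap.adjoint (A i) (z i) with hu
  have h1 : (‖u‖ ^ 2 : ℝ) = RCLike.re ⟪u, u⟫ := (inner_self_eq_norm_sq (𝕜 := ℂ) u).symm
  have h2 : ⟪u, u⟫ = ∑ i ∈ t, ⟪z i, A i u⟫ := by
    rw [hu, sum_inner]
    exact Finset.sum_congr rfl fun i _ => adjoint_inner_left (A i) u (z i)
  have h3 : ‖u‖ ^ 2 ≤ ∑ i ∈ t, ‖z i‖ * ‖A i u‖ := by
    rw [h1, h2, map_sum]
    refine le_trans (Finset.sum_le_sum fun i _ => ?_) le_rfl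
    calc RCLike.re ⟪z i, A i u⟫ ≤ ‖⟪z i, A i u⟫‖ := RCLike.re_le_norm _
      _ ≤ ‖z i‖ * ‖A i u‖ := norm_inner_le_norm _ _
  have h4 : (∑ i ∈ t, ‖z i‖ * ‖A i u‖) ^ 2 ≤ (∑ i ∈ t, ‖z i‖ ^ 2) * ∑ i ∈ t, ‖A i u‖ ^ 2 :=
    Finset.sum_mul_sq_le_sq_mul_sq t _ _
  obtain ⟨s, hs, hsle⟩ := hA u
  have h5 : ∑ i ∈ t, ‖A i u‖ ^ 2 ≤ β * ‖u‖ ^ 2 :=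
    le_trans (sum_le_hasSum t (fun i _ => sq_nonneg _) hs) hsle
  have hz0 : 0 ≤ ∑ i ∈ t, ‖z i‖ ^ 2 := Finset.sum_nonneg fun i _ => sq_nonneg _
  rcases eq_or_lt_of_le (norm_nonneg u) with h | h
  · rw [← h]
    norm_num
    exact mul_nonneg hβ hz0
  · have h6 : (‖u‖ ^ 2) ^ 2 ≤ (∑ i ∈ t, ‖z i‖ ^ 2) * (β * ‖u‖ ^ 2) := by
      calc (‖u‖ ^ 2) ^ 2 ≤ (∑ i ∈ t, ‖z i‖ * ‖A i u‖) ^ 2 := by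
            have := h3; nlinarith [sq_nonneg (‖u‖)]
        _ ≤ (∑ i ∈ t, ‖z i‖ ^ 2) * ∑ i ∈ t, ‖A i u‖ ^ 2 := h4
        _ ≤ (∑ i ∈ t, ‖z i‖ ^ 2) * (β * ‖u‖ ^ 2) := by
            exact mul_le_mul_of_nonneg_left h5 hz0
    have hupos : (0:ℝ) < ‖u‖ ^ 2 := by positivity
    nlinarith [h6]

private lemma bessel_synthesis_summable (A : I → H →L[ℂ] H) (β : ℝ) (hβ : 0 ≤ β)
    (hA : ∀ x : H, ∃ s : ℝ, HasSum (fun i => ‖A i x‖ ^ 2) s ∧ s ≤ β * ‖x‖ ^ 2)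
    (z : I → H) (hz : Summable fun i => ‖z i‖ ^ 2) :
    Summable fun i => ContinuousLinearMap.adjoint (A i) (z i) := by
  rw [summable_iff_vanishing_norm]
  intro ε hε
  have hε' : (0:ℝ) < ε ^ 2 / (β + 1) := by positivity
  obtain ⟨s, hs⟩ := summable_iff_vanishing_norm.1 hz _ hε'
  refine ⟨s, fun t ht => ?_⟩
  have h1 := bessel_finset_bound A β hβ hA z t
  have h2 := hs t ht
  have h3 : ∑ i ∈ t, ‖z i‖ ^ 2 ≤ ‖∑ i ∈ t, ‖z i‖ ^ 2‖ := le_abs_self _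
  have hz0 : 0 ≤ ∑ i ∈ t, ‖z i‖ ^ 2 := Finset.sum_nonneg fun i _ => sq_nonneg _
  have h4 : ‖∑ i ∈ t, ContinuousLinearMap.adjoint (A i) (z i)‖ ^ 2 < ε ^ 2 := by
    calc ‖∑ i ∈ t, ContinuousLinearMap.adjoint (A i) (z i)‖ ^ 2
        ≤ β * ∑ i ∈ t, ‖z i‖ ^ 2 := h1
      _ ≤ (β + 1) * ∑ i ∈ t, ‖z i‖ ^ 2 := by nlinarith
      _ < (β + 1) * (ε ^ 2 / (β + 1)) := by
          have hβ1 : (0:ℝ) < β + 1 := by linarith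
          exact mul_lt_mul_of_pos_left (lt_of_le_of_lt h3 h2) hβ1
      _ = ε ^ 2 := by field_simp
  nlinarith [norm_nonneg (∑ i ∈ t, ContinuousLinearMap.adjoint (A i) (z i)), hε]

private lemma dual_swap (A B : I → H →L[ℂ] H) (β : ℝ) (hβ : 0 ≤ β)
    (hA : ∀ x : H, ∃ s : ℝ, HasSum (fun i => ‖A i x‖ ^ 2) s ∧ s ≤ β * ‖x‖ ^ 2)
    (hB : ∀ x : H, Summable fun i => ‖B i x‖ ^ 2)
    (hdual : ∀ x : H, HasSum (fun i => ContinuousLinearMap.adjoint (B i) (A i x)) x)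
    (x : H) : HasSum (fun i => ContinuousLinearMap.adjoint (A i) (B i x)) x := by
  obtain ⟨u, hu⟩ := (bessel_synthesis_summable A β hβ hA (fun i => B i x) (hB x))
  convert hu using 1
  refine (ext_inner_left ℂ fun y => ?_)
  have h1 : HasSum (fun i => ⟪y, ContinuousLinearMap.adjoint (A i) (B i x)⟫) ⟪y, u⟫ :=
    hu.mapL (innerSL ℂ y)
  have h2 : HasSum (fun i => ⟪x, ContinuousLinearMap.adjoint (B i) (A i y)⟫) ⟪x, y⟫ :=
    (hdual y).mapL (innerSL ℂ x)
  have h3 := h2.star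
  have h4 : (fun i => star ⟪x, ContinuousLinearMap.adjoint (B i) (A i y)⟫)
      = fun i => ⟪y, ContinuousLinearMap.adjoint (A i) (B i x)⟫ := by
    funext i
    rw [← inner_conj_symm]
    simp only [starRingEnd_apply]
    rw [adjoint_inner_left, adjoint_inner_right]
    exact star_star _
  rw [h4] at h3
  have h5 : (star ⟪x, y⟫ : ℂ) = ⟪y, x⟫ := by
    rw [← starRingEnd_apply]; exact inner_conj_symm y x
  rw [h5] at h3
  exact (h1.unique h3).symm

private lemma sq_smul_le {c a b d : ℝ} (hc : 0 ≤ c) (ha : 0 ≤ a) (hd : 0 ≤ d)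
    (h : a ≤ d * b) : (c * a) ^ 2 ≤ d ^ 2 * (c ^ 2 * b ^ 2) := by
  nlinarith [mul_self_le_mul_self ha h, sq_nonneg c, mul_nonneg hc ha]

private lemma le_mul_sq_mono {β a b : ℝ} (hβ : 0 ≤ β) (ha : 0 ≤ a) (h : a ≤ b) :
    β * a ^ 2 ≤ β * b ^ 2 := by
  nlinarith [mul_self_le_mul_self ha h]

private lemma opBessel_add {A B : I → H →L[ℂ] H} (hA : OpBessel A) (hB : OpBessel B) :
    OpBessel (fun i => A i + B i) := by
  obtain ⟨βA, hA⟩ := hA; obtain ⟨βB, hB⟩ := hB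
  refine ⟨2*βA + 2*βB, fun x => ?_⟩
  obtain ⟨sA, hsA, hA'⟩ := hA x; obtain ⟨sB, hsB, hB'⟩ := hB x
  have hle : ∀ i, ‖(A i + B i) x‖^2 ≤ 2*‖A i x‖^2 + 2*‖B i x‖^2 := by
    intro i
    have h0 : ‖(A i + B i) x‖ = ‖A i x + B i x‖ := by simp
    have := norm_add_le (A i x) (B i x)
    rw [h0]
    nlinarith [norm_nonneg (A i x), norm_nonneg (B i x), norm_nonneg (A i x + B i x),
      sq_nonneg (‖A i x‖ - ‖B i x‖), sq_nonneg (‖A i x‖ + ‖B i x‖)]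
  have hg : HasSum (fun i => 2*‖A i x‖^2 + 2*‖B i x‖^2) (2*sA + 2*sB) :=
    (hsA.mul_left 2).add (hsB.mul_left 2)
  have hsum : Summable (fun i => ‖(A i + B i) x‖^2) :=
    Summable.of_nonneg_of_le (fun i => sq_nonneg _) hle hg.summable
  refine ⟨∑' i, ‖(A i + B i) x‖^2, hsum.hasSum, ?_⟩
  calc ∑' i, ‖(A i + B i) x‖^2 ≤ ∑' i, (2*‖A i x‖^2 + 2*‖B i x‖^2) :=
        Summable.tsum_le_tsum hle hsum hg.summable
    _ = 2*sA + 2*sB := hg.tsum_eq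
    _ ≤ (2*βA + 2*βB) * ‖x‖^2 := by nlinarith [sq_nonneg ‖x‖]

end Helpers

set_option maxHeartbeats 2000000 in
/-- the inverse of an invertible `(m,R)`-Bessel fusion multiplier is represented
via the unique operator-valued dual frame `Q† = {ω_iP_{W_i}S⁻¹ + conj(m_i)L_i}` of
`A_W = {ω_iP_{W_i}}` satisfying `M⁻¹ = T*_{Q†} D_{(mR)⁻¹} T_B` for every operator-valued dual
frame `B` of `A_V = {υ_iP_{V_i}}`. -/
theorem inverse_multiplier_representation
    {H : Type*} [NormedAddCommGroup H] [InnerProductSpace ℂ H] [CompleteSpace H]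
    [TopologicalSpace.SeparableSpace H] [Nontrivial H]
    {I : Type*} [Countable I]
    (W V : I → Submodule ℂ H)
    (hW : ∀ i, IsClosed ((W i) : Set H)) (hV : ∀ i, IsClosed ((V i) : Set H))
    (ω υ : I → ℝ)
    (hωseq : ∀ i, 0 ≤ ω i ∧ (ω i = 0 ↔ W i = ⊥))
    (hυseq : ∀ i, 0 ≤ υ i ∧ (υ i = 0 ↔ V i = ⊥))
    (αW βW αV βV : ℝ) (hαW : 0 < αW) (hαV : 0 < αV)
    (hWframe : ∀ x : H, ∃ s : ℝ,
      HasSum (fun i => ω i ^ 2 * ‖fproj (W i) (hW i) x‖ ^ 2) s ∧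
      αW * ‖x‖ ^ 2 ≤ s ∧ s ≤ βW * ‖x‖ ^ 2)
    (hVframe : ∀ x : H, ∃ s : ℝ,
      HasSum (fun i => υ i ^ 2 * ‖fproj (V i) (hV i) x‖ ^ 2) s ∧
      αV * ‖x‖ ^ 2 ≤ s ∧ s ≤ βV * ‖x‖ ^ 2)
    (m : I → ℂ) (hm : BddAbove (Set.range fun i => ‖m i‖))
    (R : I → H →L[ℂ] H) (hR : BddAbove (Set.range fun i => ‖R i‖))
    (γ δ : ℝ) (hC : CondC m R γ δ)
    -- the fusion frame operator S_{W,ω} and its inverse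
    (S Sinv : H →L[ℂ] H)
    (hS : ∀ x : H, HasSum (fun i => (ω i ^ 2) • fproj (W i) (hW i) x) (S x))
    (hSinv : S ∘L Sinv = 1 ∧ Sinv ∘L S = 1)
    -- the multiplier M = M_{mR,V,W} and its inverse
    (M Minv : H →L[ℂ] H)
    (hM : ∀ x : H, HasSum
      (fun i => m i • (υ i * ω i) • fproj (V i) (hV i) ((R i) (fproj (W i) (hW i) x))) (M x))
    (hMinv : M ∘L Minv = 1 ∧ Minv ∘L M = 1)
    -- the inverses (m_iR_i)⁻¹
    (Rinv : I → H →L[ℂ] H)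
    (hRinv : ∀ i, (m i • R i) ∘L Rinv i = 1 ∧ Rinv i ∘L (m i • R i) = 1)
    -- L_i = υ_i R_i* P_{V_i} (M*)⁻¹ − (ω_i/conj(m_i)) P_{W_i} S⁻¹
    (L : I → H →L[ℂ] H)
    (hL : ∀ i, L i =
      (υ i : ℂ) • ((ContinuousLinearMap.adjoint (R i)).comp
        ((fproj (V i) (hV i)).comp (ContinuousLinearMap.adjoint Minv))) -
      ((ω i : ℂ) / (starRingEnd ℂ) (m i)) • ((fproj (W i) (hW i)).comp Sinv))
    -- Q_i† = ω_i P_{W_i} S⁻¹ + conj(m_i) L_i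
    (Qdag : I → H →L[ℂ] H)
    (hQdag : ∀ i, Qdag i =
      (ω i : ℂ) • ((fproj (W i) (hW i)).comp Sinv) + (starRingEnd ℂ) (m i) • L i) :
    -- Q† = {conj(m_i) υ_i R_i* P_{V_i} (M*)⁻¹}
    (∀ i, Qdag i = ((starRingEnd ℂ) (m i) * (υ i : ℂ)) •
      ((ContinuousLinearMap.adjoint (R i)).comp
        ((fproj (V i) (hV i)).comp (ContinuousLinearMap.adjoint Minv)))) ∧
    -- Q† is an operator-valued dual frame of A_W = {ω_i P_{W_i}}
    IsOpDualOf Qdag (fun i => ω i • fproj (W i) (hW i)) ∧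
    -- M⁻¹ = T*_{Q†} D_{(mR)⁻¹} T_B for every operator-valued dual frame B of A_V
    (∀ B : I → H →L[ℂ] H, IsOpDualOf B (fun i => υ i • fproj (V i) (hV i)) →
      ∀ x : H, HasSum
        (fun i => (ContinuousLinearMap.adjoint (Qdag i)) ((Rinv i) (B i x))) (Minv x)) ∧
    -- and Q† is the unique such operator-valued dual frame of A_W
    (∀ Q : I → H →L[ℂ] H, IsOpDualOf Q (fun i => ω i • fproj (W i) (hW i)) →
      (∀ B : I → H →L[ℂ] H, IsOpDualOf B (fun i => υ i • fproj (V i) (hV i)) →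
        ∀ x : H, HasSum
          (fun i => (ContinuousLinearMap.adjoint (Q i)) ((Rinv i) (B i x))) (Minv x)) →
      ∀ i, Q i = Qdag i) := by
  classical
  obtain ⟨hγ, hδ, hCineq⟩ := hC
  obtain ⟨x₀, hx₀⟩ := exists_ne (0 : H)
  have hx₀n : (0:ℝ) < ‖x₀‖ := norm_pos_iff.2 hx₀
  -- basic facts
  have hm0 : ∀ i, m i ≠ 0 := by
    intro i hmi
    have h1 := congrArg (fun T : H →L[ℂ] H => T x₀) (hRinv i).1
    simp only [ContinuousLinearMap.coe_comp', Function.comp_apply,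
      ContinuousLinearMap.smul_apply, hmi, zero_smul, ContinuousLinearMap.one_apply] at h1
    exact hx₀ h1.symm
  have hPadj : ∀ (U : Submodule ℂ H) (hU : IsClosed (U : Set H)),
      ContinuousLinearMap.adjoint (fproj U hU) = fproj U hU := by
    intro U hU
    haveI : CompleteSpace U := hU.completeSpace_coe
    exact (isSelfAdjoint_starProjection U).adjoint_eq
  have hPinner : ∀ (U : Submodule ℂ H) (hU : IsClosed (U : Set H)) (a b : H),
      ⟪fproj U hU a, b⟫ = ⟪a, fproj U hU b⟫ := by
    intro U hU a b
    conv_lhs => rw [← hPadj U hU]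
    exact adjoint_inner_left (fproj U hU) b a
  have hυ0 : ∀ i, 0 ≤ υ i := fun i => (hυseq i).1
  have hω0 : ∀ i, 0 ≤ ω i := fun i => (hωseq i).1
  have hβV : 0 ≤ βV := by
    obtain ⟨s, hs, hl, hu⟩ := hVframe x₀
    have hx2 : (0:ℝ) < ‖x₀‖^2 := by positivity
    nlinarith
  have hβW : 0 ≤ βW := by
    obtain ⟨s, hs, hl, hu⟩ := hWframe x₀
    have hx2 : (0:ℝ) < ‖x₀‖^2 := by positivity
    nlinarith
  have hadj_smul : ∀ (c : ℂ) (T : H →L[ℂ] H),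
      ContinuousLinearMap.adjoint (c • T)
        = (starRingEnd ℂ) c • ContinuousLinearMap.adjoint T := by
    intro c T
    rw [← star_eq_adjoint, ← star_eq_adjoint, star_smul]
    rfl
  have hreal_smul : ∀ (r : ℝ) (T : H →L[ℂ] H), r • T = (r : ℂ) • T := by
    intro r T
    ext x
    simp only [ContinuousLinearMap.smul_apply]
    exact (Complex.coe_smul r (T x)).symm
  -- claim 1
  have claim1 : ∀ i, Qdag i = ((starRingEnd ℂ) (m i) * (υ i : ℂ)) •
      ((ContinuousLinearMap.adjoint (R i)).comp
        ((fproj (V i) (hV i)).comp (ContinuousLinearMap.adjoint Minv))) := by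
    intro i
    have hmc : (starRingEnd ℂ) (m i) ≠ 0 := by
      rw [starRingEnd_apply]; exact star_ne_zero.2 (hm0 i)
    rw [hQdag i, hL i, smul_sub, smul_smul, smul_smul]
    have h2 : (starRingEnd ℂ) (m i) * ((ω i : ℂ) / (starRingEnd ℂ) (m i)) = (ω i : ℂ) := by
      field_simp
    rw [h2]
    abel
  have claim1adj : ∀ i, ContinuousLinearMap.adjoint (Qdag i)
      = (m i * (υ i : ℂ)) • ((Minv.comp (fproj (V i) (hV i))).comp (R i)) := by
    intro i
    rw [claim1 i, hadj_smul, adjoint_comp, adjoint_comp, adjoint_adjoint, adjoint_adjoint,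
      hPadj]
    congr 1
    simp [map_mul, Complex.conj_conj, Complex.conj_ofReal]
  have hQdagadj_apply : ∀ i (w : H), ContinuousLinearMap.adjoint (Qdag i) w
      = m i • (υ i : ℂ) • Minv (fproj (V i) (hV i) (R i w)) := by
    intro i w
    rw [claim1adj i]
    simp only [ContinuousLinearMap.smul_apply, ContinuousLinearMap.coe_comp',
      Function.comp_apply]
    rw [mul_smul]
  have hconjR_le : ∀ i (w : H),
      ‖(starRingEnd ℂ) (m i) • ContinuousLinearMap.adjoint (R i) w‖ ≤ δ * ‖w‖ :=
    fun i w => (hCineq i w).2.1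
  have hmR_le : ∀ i (w : H), ‖m i • R i w‖ ≤ δ * ‖w‖ := by
    intro i w
    have hadj : ‖ContinuousLinearMap.adjoint (m i • R i)‖ ≤ δ := by
      rw [hadj_smul]
      refine ContinuousLinearMap.opNorm_le_bound _ hδ.le fun v => ?_
      simpa using hconjR_le i v
    have hop : ‖m i • R i‖ ≤ δ := by
      rwa [LinearIsometryEquiv.norm_map] at hadj
    calc ‖m i • R i w‖ = ‖(m i • R i) w‖ := by simp
      _ ≤ ‖m i • R i‖ * ‖w‖ := (m i • R i).le_opNorm w
      _ ≤ δ * ‖w‖ := mul_le_mul_of_nonneg_right hop (norm_nonneg w)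
  -- Bessel data for A_V and A_W
  have hAVdata : ∀ x : H, ∃ s : ℝ,
      HasSum (fun i => ‖(υ i • fproj (V i) (hV i)) x‖ ^ 2) s ∧ s ≤ βV * ‖x‖ ^ 2 := by
    intro x
    obtain ⟨s, hs, _, hub⟩ := hVframe x
    refine ⟨s, ?_, hub⟩
    have he : (fun i => ‖(υ i • fproj (V i) (hV i)) x‖ ^ 2)
        = fun i => υ i ^ 2 * ‖fproj (V i) (hV i) x‖ ^ 2 := by
      funext i
      rw [ContinuousLinearMap.smul_apply, norm_smul, Real.norm_eq_abs,
        abs_of_nonneg (hυ0 i), mul_pow]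
    rw [he]
    exact hs
  have hAWdata : ∀ x : H, ∃ s : ℝ,
      HasSum (fun i => ‖(ω i • fproj (W i) (hW i)) x‖ ^ 2) s ∧ s ≤ βW * ‖x‖ ^ 2 := by
    intro x
    obtain ⟨s, hs, _, hub⟩ := hWframe x
    refine ⟨s, ?_, hub⟩
    have he : (fun i => ‖(ω i • fproj (W i) (hW i)) x‖ ^ 2)
        = fun i => ω i ^ 2 * ‖fproj (W i) (hW i) x‖ ^ 2 := by
      funext i
      rw [ContinuousLinearMap.smul_apply, norm_smul, Real.norm_eq_abs,
        abs_of_nonneg (hω0 i), mul_pow]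
    rw [he]
    exact hs
  have hAVadj : ∀ i, ContinuousLinearMap.adjoint (υ i • fproj (V i) (hV i))
      = υ i • fproj (V i) (hV i) := by
    intro i
    simp only [hreal_smul]
    rw [hadj_smul, hPadj]
    congr 1
    exact Complex.conj_ofReal (υ i)
  have hAWadj : ∀ i, ContinuousLinearMap.adjoint (ω i • fproj (W i) (hW i))
      = ω i • fproj (W i) (hW i) := by
    intro i
    simp only [hreal_smul]
    rw [hadj_smul, hPadj]
    congr 1
    exact Complex.conj_ofReal (ω i)
  -- Bessel of Qdag
  have hQdagterm : ∀ i (x : H), Qdag i x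
      = (υ i : ℂ) • ((starRingEnd ℂ) (m i) • ContinuousLinearMap.adjoint (R i)
          (fproj (V i) (hV i) (ContinuousLinearMap.adjoint Minv x))) := by
    intro i x
    rw [claim1 i]
    simp only [ContinuousLinearMap.smul_apply, ContinuousLinearMap.coe_comp',
      Function.comp_apply]
    rw [mul_comm, mul_smul]
  have hQdagBessel : OpBessel Qdag := by
    refine ⟨δ^2 * (βV * ‖ContinuousLinearMap.adjoint Minv‖^2), fun x => ?_⟩
    obtain ⟨s, hs, _, hub⟩ := hVframe (ContinuousLinearMap.adjoint Minv x)
    have key : ∀ i, ‖Qdag i x‖^2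
        ≤ δ^2 * (υ i ^ 2 * ‖fproj (V i) (hV i) (ContinuousLinearMap.adjoint Minv x)‖^2) := by
      intro i
      rw [hQdagterm i x, norm_smul]
      have h1 := hconjR_le i (fproj (V i) (hV i) (ContinuousLinearMap.adjoint Minv x))
      have h2 : ‖(υ i : ℂ)‖ = υ i := by
        rw [Complex.norm_real, Real.norm_eq_abs, abs_of_nonneg (hυ0 i)]
      rw [h2]
      exact sq_smul_le (hυ0 i) (norm_nonneg _) hδ.le h1
    have hsum : Summable (fun i => ‖Qdag i x‖^2) :=
      Summable.of_nonneg_of_le (fun i => sq_nonneg _) key ((hs.summable).mul_left (δ^2))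
    refine ⟨∑' i, ‖Qdag i x‖^2, hsum.hasSum, ?_⟩
    have h6 : ∑' i, ‖Qdag i x‖^2 ≤ δ^2 * s := by
      calc ∑' i, ‖Qdag i x‖^2
          ≤ ∑' i, δ^2 * (υ i ^ 2 * ‖fproj (V i) (hV i) (ContinuousLinearMap.adjoint Minv x)‖^2)
            := Summable.tsum_le_tsum key hsum ((hs.summable).mul_left _)
        _ = δ^2 * s := by rw [tsum_mul_left, hs.tsum_eq]
    have h7 : ‖ContinuousLinearMap.adjoint Minv x‖ ≤ ‖ContinuousLinearMap.adjoint Minv‖ * ‖x‖ :=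
      (ContinuousLinearMap.adjoint Minv).le_opNorm x
    have h8 : s ≤ βV * (‖ContinuousLinearMap.adjoint Minv‖ * ‖x‖)^2 :=
      le_trans hub (le_mul_sq_mono hβV (norm_nonneg _) h7)
    calc ∑' i, ‖Qdag i x‖^2 ≤ δ^2 * s := h6
      _ ≤ δ^2 * (βV * (‖ContinuousLinearMap.adjoint Minv‖ * ‖x‖)^2) :=
          mul_le_mul_of_nonneg_left h8 (sq_nonneg δ)
      _ = δ^2 * (βV * ‖ContinuousLinearMap.adjoint Minv‖^2) * ‖x‖^2 := by ring
  -- duality of Qdag with A_W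
  have hMinvM : ∀ x : H, Minv (M x) = x := by
    intro x
    have := congrArg (fun T : H →L[ℂ] H => T x) hMinv.2
    simpa using this
  have hQdagdual : ∀ x : H, HasSum
      (fun i => ContinuousLinearMap.adjoint (Qdag i) ((ω i • fproj (W i) (hW i)) x)) x := by
    intro x
    have h1 := (hM x).mapL Minv
    rw [hMinvM x] at h1
    have h3 : (fun i => ContinuousLinearMap.adjoint (Qdag i) ((ω i • fproj (W i) (hW i)) x))
        = fun i => Minv (m i • (υ i * ω i) •
            fproj (V i) (hV i) ((R i) (fproj (W i) (hW i) x))) := by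
      funext i
      rw [hQdagadj_apply]
      simp only [ContinuousLinearMap.smul_apply, map_smul, mul_smul, Complex.coe_smul,
        map_smul_of_tower]
    rw [h3]
    exact h1
  -- claim 3
  have claim3 : ∀ B : I → H →L[ℂ] H, IsOpDualOf B (fun i => υ i • fproj (V i) (hV i)) →
      ∀ x : H, HasSum
        (fun i => ContinuousLinearMap.adjoint (Qdag i) ((Rinv i) (B i x))) (Minv x) := by
    intro B hB x
    obtain ⟨⟨βB, hBb⟩, hBd⟩ := hB
    have hBsum : ∀ y : H, Summable fun i => ‖B i y‖^2 := fun y => ((hBb y).choose_spec.1).summable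
    have hswap0 := dual_swap (fun i => υ i • fproj (V i) (hV i)) B βV hβV hAVdata hBsum hBd x
    have hswap : HasSum (fun i => (υ i • fproj (V i) (hV i)) (B i x)) x := by
      have he : (fun i => ContinuousLinearMap.adjoint (υ i • fproj (V i) (hV i)) (B i x))
          = fun i => (υ i • fproj (V i) (hV i)) (B i x) := by
        funext i; rw [hAVadj i]
      rwa [he] at hswap0
    have h1 := hswap.mapL Minv
    have h3 : (fun i => ContinuousLinearMap.adjoint (Qdag i) ((Rinv i) (B i x)))
        = fun i => Minv ((υ i • fproj (V i) (hV i)) (B i x)) := by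
      funext i
      rw [hQdagadj_apply]
      have hw : m i • R i (Rinv i (B i x)) = B i x := by
        have := congrArg (fun T : H →L[ℂ] H => T (B i x)) (hRinv i).1
        simpa using this
      calc m i • (υ i : ℂ) • Minv (fproj (V i) (hV i) (R i (Rinv i (B i x))))
          = (υ i : ℂ) • Minv (fproj (V i) (hV i) (m i • R i (Rinv i (B i x)))) := by
            simp only [map_smul]
            rw [smul_comm]
        _ = (υ i : ℂ) • Minv (fproj (V i) (hV i) (B i x)) := by rw [hw]
        _ = Minv ((υ i • fproj (V i) (hV i)) (B i x)) := by
            rw [ContinuousLinearMap.smul_apply, map_smul_of_tower]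
            exact (Complex.coe_smul (υ i) _)
    rw [h3]
    exact h1
  -- B₀ : a dual of A_V
  set B₀ : I → H →L[ℂ] H :=
    fun i => (m i * (ω i : ℂ)) • ((R i).comp ((fproj (W i) (hW i)).comp Minv)) with hB₀def
  have hB₀term : ∀ i (x : H), B₀ i x
      = (ω i : ℂ) • (m i • R i (fproj (W i) (hW i) (Minv x))) := by
    intro i x
    simp only [hB₀def, ContinuousLinearMap.smul_apply, ContinuousLinearMap.coe_comp',
      Function.comp_apply]
    rw [mul_comm, mul_smul]
  have hB₀data : ∀ x : H, ∃ s, HasSum (fun i => ‖B₀ i x‖^2) s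
      ∧ s ≤ (δ^2 * (βW * ‖Minv‖^2)) * ‖x‖^2 := by
    intro x
    obtain ⟨s, hs, _, hub⟩ := hWframe (Minv x)
    have key : ∀ i, ‖B₀ i x‖^2 ≤ δ^2 * (ω i ^ 2 * ‖fproj (W i) (hW i) (Minv x)‖^2) := by
      intro i
      rw [hB₀term i x, norm_smul]
      have h1 := hmR_le i (fproj (W i) (hW i) (Minv x))
      have h2 : ‖(ω i : ℂ)‖ = ω i := by
        rw [Complex.norm_real, Real.norm_eq_abs, abs_of_nonneg (hω0 i)]
      rw [h2]
      exact sq_smul_le (hω0 i) (norm_nonneg _) hδ.le h1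
    have hsum : Summable (fun i => ‖B₀ i x‖^2) :=
      Summable.of_nonneg_of_le (fun i => sq_nonneg _) key ((hs.summable).mul_left (δ^2))
    refine ⟨∑' i, ‖B₀ i x‖^2, hsum.hasSum, ?_⟩
    have h6 : ∑' i, ‖B₀ i x‖^2 ≤ δ^2 * s := by
      calc ∑' i, ‖B₀ i x‖^2
          ≤ ∑' i, δ^2 * (ω i ^ 2 * ‖fproj (W i) (hW i) (Minv x)‖^2)
            := Summable.tsum_le_tsum key hsum ((hs.summable).mul_left _)
        _ = δ^2 * s := by rw [tsum_mul_left, hs.tsum_eq]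
    have h7 : ‖Minv x‖ ≤ ‖Minv‖ * ‖x‖ := Minv.le_opNorm x
    have h8 : s ≤ βW * (‖Minv‖ * ‖x‖)^2 :=
      le_trans hub (le_mul_sq_mono hβW (norm_nonneg _) h7)
    calc ∑' i, ‖B₀ i x‖^2 ≤ δ^2 * s := h6
      _ ≤ δ^2 * (βW * (‖Minv‖ * ‖x‖)^2) :=
          mul_le_mul_of_nonneg_left h8 (sq_nonneg δ)
      _ = δ^2 * (βW * ‖Minv‖^2) * ‖x‖^2 := by ring
  have hB₀Bessel : OpBessel B₀ := ⟨_, hB₀data⟩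
  -- the adjoint HasSum for M
  have hMadj : ∀ x : H, HasSum
      (fun i => (starRingEnd ℂ) (m i) • ((ω i * υ i) : ℝ) •
        fproj (W i) (hW i) (ContinuousLinearMap.adjoint (R i) (fproj (V i) (hV i) x)))
      (ContinuousLinearMap.adjoint M x) := by
    intro x
    set z : I → H := fun i => (starRingEnd ℂ) (m i) •
      (υ i : ℝ) • ContinuousLinearMap.adjoint (R i) (fproj (V i) (hV i) x) with hzdef
    have hzsum : Summable fun i => ‖z i‖^2 := by
      obtain ⟨s, hs, _, _⟩ := hVframe x
      refine Summable.of_nonneg_of_le (fun i => sq_nonneg _) (fun i => ?_)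
        ((hs.summable).mul_left (δ^2))
      have he : z i = (υ i : ℝ) • ((starRingEnd ℂ) (m i) •
          ContinuousLinearMap.adjoint (R i) (fproj (V i) (hV i) x)) := smul_comm _ _ _
      rw [he, norm_smul, Real.norm_eq_abs, abs_of_nonneg (hυ0 i)]
      exact sq_smul_le (hυ0 i) (norm_nonneg _) hδ.le (hconjR_le i (fproj (V i) (hV i) x))
    obtain ⟨u, hu⟩ := bessel_synthesis_summable
      (fun i => ω i • fproj (W i) (hW i)) βW hβW hAWdata z hzsum
    have hterm : (fun i => ContinuousLinearMap.adjoint (ω i • fproj (W i) (hW i)) (z i))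
        = fun i => (starRingEnd ℂ) (m i) • ((ω i * υ i) : ℝ) •
            fproj (W i) (hW i) (ContinuousLinearMap.adjoint (R i) (fproj (V i) (hV i) x)) := by
      funext i
      rw [hAWadj i, hzdef]
      simp only [ContinuousLinearMap.smul_apply, map_smul, mul_smul, map_smul_of_tower,
        smul_comm (ω i) ((starRingEnd ℂ) (m i))]
    rw [hterm] at hu
    have huid : u = ContinuousLinearMap.adjoint M x := by
      refine ext_inner_left ℂ fun y => ?_
      have h1 := hu.mapL (innerSL ℂ y)
      have h2 := ((hM y).mapL (innerSL ℂ x)).star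
      have h4 : (fun i => star (innerSL ℂ x (m i • (υ i * ω i) •
            fproj (V i) (hV i) ((R i) (fproj (W i) (hW i) y)))))
          = fun i => innerSL ℂ y ((starRingEnd ℂ) (m i) • ((ω i * υ i) : ℝ) •
              fproj (W i) (hW i) (ContinuousLinearMap.adjoint (R i) (fproj (V i) (hV i) x))) := by
        funext i
        simp only [innerSL_apply_apply]
        rw [← starRingEnd_apply, inner_conj_symm]
        rw [inner_smul_left, inner_smul_right]
        congr 1
        have hr1 : ((υ i * ω i : ℝ)) • fproj (V i) (hV i) ((R i) (fproj (W i) (hW i) y))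
            = ((υ i * ω i : ℝ) : ℂ) • fproj (V i) (hV i) ((R i) (fproj (W i) (hW i) y)) :=
          (Complex.coe_smul _ _).symm
        have hr2 : ((ω i * υ i : ℝ)) • fproj (W i) (hW i)
              (ContinuousLinearMap.adjoint (R i) (fproj (V i) (hV i) x))
            = ((ω i * υ i : ℝ) : ℂ) • fproj (W i) (hW i)
              (ContinuousLinearMap.adjoint (R i) (fproj (V i) (hV i) x)) :=
          (Complex.coe_smul _ _).symm
        rw [hr1, hr2, inner_smul_left, inner_smul_right, Complex.conj_ofReal]
        have hco : ((υ i * ω i : ℝ) : ℂ) = ((ω i * υ i : ℝ) : ℂ) := by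
          norm_cast; ring
        rw [hco]
        congr 1
        rw [← hPinner (W i) (hW i), hPinner (V i) (hV i)]
        exact (adjoint_inner_right (R i) _ _).symm
      rw [h4] at h2
      have h5 : star (innerSL ℂ x (M y)) = ⟪y, ContinuousLinearMap.adjoint M x⟫ := by
        simp only [innerSL_apply_apply]
        rw [← starRingEnd_apply, inner_conj_symm, adjoint_inner_right]
      rw [h5] at h2
      have h1' : HasSum (fun i => ⟪y, (starRingEnd ℂ) (m i) • ((ω i * υ i) : ℝ) •
          fproj (W i) (hW i) (ContinuousLinearMap.adjoint (R i) (fproj (V i) (hV i) x))⟫)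
          (⟪y, u⟫) := h1
      exact h1'.unique h2
    rwa [huid] at hu
  have hMinvMadj : ∀ x : H,
      ContinuousLinearMap.adjoint Minv (ContinuousLinearMap.adjoint M x) = x := by
    intro x
    have h1 : ContinuousLinearMap.adjoint Minv ∘L ContinuousLinearMap.adjoint M
        = (1 : H →L[ℂ] H) := by
      rw [← adjoint_comp, hMinv.1, ← star_eq_adjoint, star_one]
    have := congrArg (fun T : H →L[ℂ] H => T x) h1
    simpa using this
  have hB₀dual : ∀ x : H, HasSum
      (fun i => ContinuousLinearMap.adjoint (B₀ i) ((υ i • fproj (V i) (hV i)) x)) x := by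
    intro x
    have h1 := (hMadj x).mapL (ContinuousLinearMap.adjoint Minv)
    rw [hMinvMadj x] at h1
    have h3 : (fun i => ContinuousLinearMap.adjoint (B₀ i) ((υ i • fproj (V i) (hV i)) x))
        = fun i => ContinuousLinearMap.adjoint Minv ((starRingEnd ℂ) (m i) • ((ω i * υ i) : ℝ) •
            fproj (W i) (hW i) (ContinuousLinearMap.adjoint (R i) (fproj (V i) (hV i) x))) := by
      funext i
      rw [hB₀def]
      simp only
      rw [hadj_smul, adjoint_comp, adjoint_comp, hPadj]
      simp only [ContinuousLinearMap.smul_apply, ContinuousLinearMap.coe_comp',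
        Function.comp_apply, map_mul, mul_smul, map_smul, map_smul_of_tower,
        Complex.conj_ofReal, Complex.coe_smul]
    rw [h3]
    exact h1
  have hB₀isdual : IsOpDualOf B₀ (fun i => υ i • fproj (V i) (hV i)) := ⟨hB₀Bessel, hB₀dual⟩
  -- rank one adjoint
  have hrk_adj : ∀ (a b : H), ContinuousLinearMap.adjoint ((innerSL ℂ a).smulRight b)
      = (innerSL ℂ b).smulRight a := by
    intro a b
    symm
    rw [eq_adjoint_iff]
    intro u v
    simp only [ContinuousLinearMap.smulRight_apply, innerSL_apply_apply, inner_smul_left,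
      inner_smul_right]
    rw [← inner_conj_symm b u]
    rw [starRingEnd_apply, starRingEnd_apply, star_star]
    ring
  -- key uniqueness computation
  have keyUniq : ∀ Q : I → H →L[ℂ] H,
      (∀ B : I → H →L[ℂ] H, IsOpDualOf B (fun i => υ i • fproj (V i) (hV i)) →
        ∀ x : H, HasSum
          (fun i => ContinuousLinearMap.adjoint (Q i) ((Rinv i) (B i x))) (Minv x)) →
      ∀ j (z : H), ContinuousLinearMap.adjoint (Q j) (Rinv j z)
        = Minv ((υ j • fproj (V j) (hV j)) z) := by
    intro Q hprop j z
    set v' : H := (υ j • fproj (V j) (hV j)) z with hv'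
    set Zop : H →L[ℂ] H := (innerSL ℂ x₀).smulRight z with hZopdef
    set K : I → H →L[ℂ] H := fun i => (innerSL ℂ x₀).smulRight (B₀ i v') with hKdef
    set B' : I → H →L[ℂ] H := fun i => B₀ i + (if i = j then Zop else 0) - K i with hB'def
    have hB'Bessel : OpBessel B' := by
      have e : B' = fun i => (B₀ i + (if i = j then Zop else 0)) + (-(K i)) := by
        funext i
        simp only [hB'def]
        abel
      rw [e]
      refine opBessel_add (opBessel_add hB₀Bessel ?_) ?_
      · refine ⟨‖Zop‖^2, fun x => ?_⟩
        have hite : (fun i => ‖(if i = j then Zop else 0) x‖^2)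
            = fun i => if i = j then ‖Zop x‖^2 else 0 := by
          funext i
          by_cases h : i = j <;> simp [h]
        refine ⟨‖Zop x‖^2, ?_, ?_⟩
        · rw [hite]; exact hasSum_ite_eq j _
        · have := Zop.le_opNorm x
          nlinarith [norm_nonneg (Zop x), norm_nonneg Zop, norm_nonneg x]
      · obtain ⟨sK, hsK, hsKle⟩ := hB₀data v'
        have hsK0 : (0:ℝ) ≤ sK := hasSum_le (fun i => sq_nonneg _) hasSum_zero hsK
        refine ⟨‖x₀‖^2 * sK, fun x => ?_⟩
        have hterm : (fun i => ‖(-(K i)) x‖^2)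
            = fun i => ‖⟪x₀, x⟫‖^2 * ‖B₀ i v'‖^2 := by
          funext i
          simp only [ContinuousLinearMap.neg_apply, norm_neg, hKdef,
            ContinuousLinearMap.smulRight_apply, innerSL_apply_apply, norm_smul, mul_pow]
        have hhs : HasSum (fun i => ‖(-(K i)) x‖^2) (‖⟪x₀, x⟫‖^2 * sK) := by
          rw [hterm]
          exact hsK.mul_left _
        refine ⟨_, hhs, ?_⟩
        have h1 := norm_inner_le_norm (𝕜 := ℂ) x₀ x
        have h2 := norm_nonneg (⟪x₀, x⟫)
        have h3 : ‖⟪x₀, x⟫‖^2 ≤ ‖x₀‖^2 * ‖x‖^2 := by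
          nlinarith [mul_self_le_mul_self h2 h1]
        nlinarith [mul_le_mul_of_nonneg_right h3 hsK0]
    have hB'dual : ∀ x : H, HasSum
        (fun i => ContinuousLinearMap.adjoint (B' i) ((υ i • fproj (V i) (hV i)) x)) x := by
      intro x
      have c1 := hB₀dual x
      have c2 : HasSum (fun i => ContinuousLinearMap.adjoint (if i = j then Zop else 0)
          ((υ i • fproj (V i) (hV i)) x)) (⟪v', x⟫ • x₀) := by
        have hval : ContinuousLinearMap.adjoint Zop ((υ j • fproj (V j) (hV j)) x)
            = ⟪v', x⟫ • x₀ := by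
          rw [hZopdef, hrk_adj]
          simp only [ContinuousLinearMap.smulRight_apply, innerSL_apply_apply]
          congr 1
          rw [hv']
          simp only [ContinuousLinearMap.smul_apply]
          rw [← Complex.coe_smul, ← Complex.coe_smul, inner_smul_left, inner_smul_right,
            Complex.conj_ofReal]
          congr 1
          exact (hPinner (V j) (hV j) z x).symm
        have hfun : (fun i => ContinuousLinearMap.adjoint (if i = j then Zop else 0)
            ((υ i • fproj (V i) (hV i)) x)) = fun i => if i = j then ⟪v', x⟫ • x₀ else 0 := by
          funext i
          by_cases h : i = j
          · subst h
            rw [if_pos rfl, if_pos rfl]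
            exact hval
          · rw [if_neg h, if_neg h]
            simp [← star_eq_adjoint]
        rw [hfun]
        exact hasSum_ite_eq j _
      have c3 : HasSum (fun i => ContinuousLinearMap.adjoint (K i)
          ((υ i • fproj (V i) (hV i)) x)) (⟪v', x⟫ • x₀) := by
        have h1 := ((hB₀dual x).mapL (innerSL ℂ v')).smul_const x₀
        have he : (fun i => ContinuousLinearMap.adjoint (K i) ((υ i • fproj (V i) (hV i)) x))
            = fun i => (innerSL ℂ v') (ContinuousLinearMap.adjoint (B₀ i)
                ((υ i • fproj (V i) (hV i)) x)) • x₀ := by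
          funext i
          rw [hKdef]
          simp only
          rw [hrk_adj]
          simp only [ContinuousLinearMap.smulRight_apply, innerSL_apply_apply]
          congr 1
          exact (adjoint_inner_right (B₀ i) _ _).symm
        rw [he]
        exact h1
      have htot := (c1.add c2).sub c3
      have hval : x + ⟪v', x⟫ • x₀ - ⟪v', x⟫ • x₀ = x := add_sub_cancel_right _ _
      rw [hval] at htot
      have he : (fun i => ContinuousLinearMap.adjoint (B' i) ((υ i • fproj (V i) (hV i)) x))
          = fun i => ContinuousLinearMap.adjoint (B₀ i) ((υ i • fproj (V i) (hV i)) x)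
            + ContinuousLinearMap.adjoint (if i = j then Zop else 0)
                ((υ i • fproj (V i) (hV i)) x)
            - ContinuousLinearMap.adjoint (K i) ((υ i • fproj (V i) (hV i)) x) := by
        funext i
        rw [hB'def]
        simp only [map_add, map_sub, ContinuousLinearMap.add_apply,
          ContinuousLinearMap.sub_apply]
      rw [he]
      exact htot
    have hB'isdual : IsOpDualOf B' (fun i => υ i • fproj (V i) (hV i)) := ⟨hB'Bessel, hB'dual⟩
    have h1 := hprop B' hB'isdual x₀
    have h2 := hprop B₀ hB₀isdual x₀
    have h3 := hprop B₀ hB₀isdual v'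
    have h4 : HasSum (fun i =>
        ContinuousLinearMap.adjoint (Q i) (Rinv i ((if i = j then Zop else 0) x₀))
        - ContinuousLinearMap.adjoint (Q i) (Rinv i (K i x₀))) 0 := by
      have h := h1.sub h2
      rw [sub_self] at h
      have he : (fun i => ContinuousLinearMap.adjoint (Q i) (Rinv i (B' i x₀))
            - ContinuousLinearMap.adjoint (Q i) (Rinv i (B₀ i x₀)))
          = fun i => ContinuousLinearMap.adjoint (Q i) (Rinv i ((if i = j then Zop else 0) x₀))
            - ContinuousLinearMap.adjoint (Q i) (Rinv i (K i x₀)) := by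
        funext i
        rw [hB'def]
        simp only [ContinuousLinearMap.add_apply, ContinuousLinearMap.sub_apply, map_add,
          map_sub]
        abel
      rwa [he] at h
    have h5 : HasSum (fun i => ContinuousLinearMap.adjoint (Q i) (Rinv i (K i x₀)))
        (⟪x₀, x₀⟫ • Minv v') := by
      have h := h3.const_smul (⟪x₀, x₀⟫)
      have he : (fun i => ContinuousLinearMap.adjoint (Q i) (Rinv i (K i x₀)))
          = fun i => ⟪x₀, x₀⟫ • ContinuousLinearMap.adjoint (Q i) (Rinv i (B₀ i v')) := by
        funext i
        rw [hKdef]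
        simp only [ContinuousLinearMap.smulRight_apply, innerSL_apply_apply, map_smul]
      rw [he]
      exact h
    have h6 := h4.add h5
    rw [zero_add] at h6
    have he6 : (fun i =>
        (ContinuousLinearMap.adjoint (Q i) (Rinv i ((if i = j then Zop else 0) x₀))
          - ContinuousLinearMap.adjoint (Q i) (Rinv i (K i x₀)))
        + ContinuousLinearMap.adjoint (Q i) (Rinv i (K i x₀)))
        = fun i => ContinuousLinearMap.adjoint (Q i) (Rinv i ((if i = j then Zop else 0) x₀)) := by
      funext i
      abel
    rw [he6] at h6
    have h8 : (fun i => ContinuousLinearMap.adjoint (Q i)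
          (Rinv i ((if i = j then Zop else 0) x₀)))
        = fun i => if i = j then ⟪x₀, x₀⟫ • ContinuousLinearMap.adjoint (Q j) (Rinv j z)
            else 0 := by
      funext i
      by_cases h : i = j
      · subst h
        rw [if_pos rfl, if_pos rfl, hZopdef]
        simp only [ContinuousLinearMap.smulRight_apply, innerSL_apply_apply, map_smul]
      · rw [if_neg h, if_neg h]
        simp
    rw [h8] at h6
    have h9 := (hasSum_ite_eq j
      (⟪x₀, x₀⟫ • ContinuousLinearMap.adjoint (Q j) (Rinv j z))).unique h6
    have h10 : (⟪x₀, x₀⟫ : ℂ) ≠ 0 := inner_self_ne_zero.2 hx₀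
    exact smul_right_injective H h10 h9
  -- assemble everything
  refine ⟨claim1, ⟨hQdagBessel, hQdagdual⟩, claim3, ?_⟩
  intro Q hQdual hprop i
  have e1 := keyUniq Q hprop i
  have e2 := keyUniq Qdag claim3 i
  have hsurj : ∀ w : H, Rinv i ((m i • R i) w) = w := by
    intro w
    have := congrArg (fun T : H →L[ℂ] H => T w) (hRinv i).2
    simpa using this
  have hadj_eq : ContinuousLinearMap.adjoint (Q i) = ContinuousLinearMap.adjoint (Qdag i) := by
    ext w
    have ha := e1 ((m i • R i) w)
    rw [hsurj] at ha
    have hb := e2 ((m i • R i) w)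
    rw [hsurj] at hb
    rw [ha, hb]
  calc Q i = ContinuousLinearMap.adjoint (ContinuousLinearMap.adjoint (Q i)) :=
        (adjoint_adjoint _).symm
    _ = ContinuousLinearMap.adjoint (ContinuousLinearMap.adjoint (Qdag i)) := by rw [hadj_eq]
    _ = Qdag i := adjoint_adjoint _
end
end
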